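/- arXiv:2006.08212 — 3 statements merged into one kernel-verified Lean document; each statement's English description precedes it below -/
import Mathlib

section
/- Let (a_n)_{n≥0} be a sequence of nonnegative reals, α > 0, γ > 0, D > 0, with a_0 ≤ D, and suppose for all k ≥ 1 that a_{k-1} - a_k ≥ γ D^{-1/α} a_{k-1}^{1+1/α}. Then for all n ≥ 1, a_n ≤ (α^α / γ^α) · D / n^α. -/
open Real

/-- Tangent-line (Bernoulli) inequality for `t ↦ t^(-q)` on `(0,1]`. -/
lemma bern_aux {q t : ℝ} (hq : 0 < q) (ht : 0 < t) (ht1 : t ≤ 1) :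
    1 + q * (1 - t) ≤ t ^ (-q) := by
  rcases le_or_gt 1 q with hq1 | hq1
  · have hs : (0:ℝ) ≤ 1 / t - 1 := by
      rw [sub_nonneg, le_div_iff₀ ht]; linarith
    have h := one_add_mul_self_le_rpow_one_add (s := 1/t - 1) (by linarith) (p := q) hq1
    have heq : (1 + (1/t - 1)) ^ q = t ^ (-q) := by
      rw [show 1 + (1/t - 1) = t⁻¹ by field_simp; ring, Real.inv_rpow ht.le,
        ← Real.rpow_neg ht.le]
    rw [heq] at h
    refine le_trans ?_ h
    have : 1 - t ≤ 1/t - 1 := by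
      rw [div_sub' ht.ne', le_div_iff₀ ht]; nlinarith
    nlinarith
  · have h := rpow_one_add_le_one_add_mul_self (s := t - 1) (by linarith) hq.le hq1.le
    have heq : (1 + (t - 1)) ^ q = t ^ q := by norm_num
    rw [heq] at h
    have hpos : 0 < 1 + q * (t - 1) := by nlinarith
    have htq : 0 < t ^ q := Real.rpow_pos_of_pos ht q
    rw [Real.rpow_neg ht.le, show (t ^ q)⁻¹ = 1 / t ^ q by ring, le_div_iff₀ htq]
    nlinarith [mul_le_mul_of_nonneg_left h (by nlinarith : (0:ℝ) ≤ 1 + q * (1 - t)),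
      sq_nonneg (q - q * t)]

/-- One step: `y^(-q) ≥ x^(-q) + q c`. -/
lemma step_aux {q c x y : ℝ} (hq : 0 < q) (hc : 0 ≤ c) (hy : 0 < y) (hxy : y ≤ x)
    (hr : c * x ^ (1 + q) ≤ x - y) : x ^ (-q) + q * c ≤ y ^ (-q) := by
  have hx : 0 < x := lt_of_lt_of_le hy hxy
  have ht : 0 < y / x := div_pos hy hx
  have ht1 : y / x ≤ 1 := (div_le_one hx).2 hxy
  have hb := bern_aux hq ht ht1
  have hyx : y ^ (-q) = x ^ (-q) * (y / x) ^ (-q) := by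
    rw [← Real.mul_rpow hx.le ht.le]
    congr 1
    field_simp
  have h1 : x ^ (-q) * (1 + q * (1 - y / x)) ≤ y ^ (-q) := by
    rw [hyx]
    exact mul_le_mul_of_nonneg_left hb (Real.rpow_nonneg hx.le _)
  have hx1 : x ^ (-q) * (1 - y / x) = x ^ (-q - 1) * (x - y) := by
    rw [show -q - 1 = -q + -1 by ring, Real.rpow_add hx,
      show x ^ (-1 : ℝ) = x⁻¹ by rw [Real.rpow_neg hx.le, Real.rpow_one]]
    field_simp
  have h1' : x ^ (-q) + q * (x ^ (-q - 1) * (x - y)) ≤ y ^ (-q) := by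
    calc x ^ (-q) + q * (x ^ (-q - 1) * (x - y))
        = x ^ (-q) * (1 + q * (1 - y / x)) := by rw [← hx1]; ring
      _ ≤ y ^ (-q) := h1
  have h3 : x ^ (-q - 1) * (c * x ^ (1 + q)) = c := by
    rw [mul_comm c, ← mul_assoc, ← Real.rpow_add hx,
      show -q - 1 + (1 + q) = 0 by ring, Real.rpow_zero, one_mul]
  have h2 : c ≤ x ^ (-q - 1) * (x - y) := by
    calc c = x ^ (-q - 1) * (c * x ^ (1 + q)) := h3.symm
      _ ≤ x ^ (-q - 1) * (x - y) :=
        mul_le_mul_of_nonneg_left hr (Real.rpow_nonneg hx.le _)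
  nlinarith [mul_le_mul_of_nonneg_left h2 hq.le]

/-- If a nonnegative real sequence satisfies
`a_{k-1} - a_k ≥ γ D^{-1/α} a_{k-1}^{1+1/α}` with `a_0 ≤ D`, then
`a_n ≤ (α^α/γ^α) D / n^α` for all `n ≥ 1`. -/
theorem sequence_polynomial_decay (a : ℕ → ℝ) (α γ D : ℝ)
    (hα : 0 < α) (hγ : 0 < γ) (hD : 0 < D)
    (hnn : ∀ n, 0 ≤ a n) (ha0 : a 0 ≤ D)
    (hrec : ∀ k : ℕ, 1 ≤ k →
      γ * D ^ (-(1 / α)) * a (k - 1) ^ (1 + 1 / α) ≤ a (k - 1) - a k) :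
    ∀ n : ℕ, 1 ≤ n → a n ≤ α ^ α / γ ^ α * D / (n : ℝ) ^ α := by
  intro n hn
  have hnR : (1 : ℝ) ≤ (n : ℝ) := by exact_mod_cast hn
  have hDq : 0 < D ^ (-(1 / α)) := Real.rpow_pos_of_pos hD _
  have hc : 0 ≤ γ * D ^ (-(1 / α)) := le_of_lt (mul_pos hγ hDq)
  have hq : 0 < 1 / α := by positivity
  have hRHS : 0 < α ^ α / γ ^ α * D / (n : ℝ) ^ α := by
    have h1 : (0:ℝ) < α ^ α := Real.rpow_pos_of_pos hα _
    have h2 : (0:ℝ) < γ ^ α := Real.rpow_pos_of_pos hγ _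
    have h3 : (0:ℝ) < (n : ℝ) ^ α := Real.rpow_pos_of_pos (by linarith) _
    positivity
  rcases eq_or_lt_of_le (hnn n) with h0 | hpos
  · rw [← h0]; exact hRHS.le
  have hmono : ∀ k, a (k + 1) ≤ a k := by
    intro k
    have h := hrec (k + 1) (by omega)
    simp only [Nat.add_sub_cancel] at h
    have : 0 ≤ γ * D ^ (-(1 / α)) * a k ^ (1 + 1 / α) :=
      mul_nonneg hc (Real.rpow_nonneg (hnn k) _)
    linarith
  have hdec : Antitone a := antitone_nat_of_succ_le hmono
  have hposk : ∀ k, k ≤ n → 0 < a k := fun k hk => lt_of_lt_of_le hpos (hdec hk)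
  have key : ∀ k, k ≤ n → (k : ℝ) * (1 / α * (γ * D ^ (-(1 / α)))) ≤ a k ^ (-(1 / α)) := by
    intro k hk
    induction k with
    | zero => simpa using Real.rpow_nonneg (hnn 0) _
    | succ k ih =>
      have hk' : k ≤ n := by omega
      have hstep := step_aux hq hc (hposk (k + 1) hk) (hmono k) ?_
      · push_cast
        have := ih hk'
        linarith
      · have h := hrec (k + 1) (by omega)
        simpa only [Nat.add_sub_cancel] using h
  have hkey := key n le_rfl
  set C : ℝ := (n : ℝ) * (1 / α * (γ * D ^ (-(1 / α)))) with hC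
  have hCpos : 0 < C := by
    have : (0:ℝ) < (n:ℝ) := by linarith
    positivity
  have han : a n = (a n ^ (-(1 / α))) ^ (-α) := by
    rw [← Real.rpow_mul (hnn n)]
    rw [show -(1 / α) * -α = 1 by field_simp]
    rw [Real.rpow_one]
  have hle : a n ≤ C ^ (-α) := by
    rw [han]
    exact Real.rpow_le_rpow_of_nonpos hCpos hkey (by linarith)
  refine hle.trans (le_of_eq ?_)
  rw [hC, Real.mul_rpow (by linarith) (by positivity),
    Real.mul_rpow (by positivity) (by positivity),
    Real.mul_rpow hγ.le hDq.le]
  have e1 : (D ^ (-(1 / α))) ^ (-α) = D := by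
    rw [← Real.rpow_mul hD.le, show -(1 / α) * -α = 1 by field_simp, Real.rpow_one]
  have e2 : (1 / α) ^ (-α) = α ^ α := by
    rw [one_div, Real.inv_rpow hα.le, Real.rpow_neg hα.le, inv_inv]
  have e3 : γ ^ (-α) = (γ ^ α)⁻¹ := Real.rpow_neg hγ.le α
  have e4 : ((n : ℝ)) ^ (-α) = (((n : ℝ)) ^ α)⁻¹ := Real.rpow_neg (by linarith) α
  rw [e1, e2, e3, e4]
  have h2 : (0:ℝ) < γ ^ α := Real.rpow_pos_of_pos hγ _
  have h3 : (0:ℝ) < ((n : ℝ)) ^ α := Real.rpow_pos_of_pos (by linarith) _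
  field_simp
end

section
/- Under the noiseless linear model and assumptions of Theorem 1 (with regularity index α), the regularity functions φ_n(β) = E⟨θ_n − θ*, Σ^{-β}(θ_n − θ*)⟩ satisfy, for all n ≥ 1 and 0 ≤ β ≤ α, the recurrence inequality φ_n(β) ≤ φ_{n-1}(β) − 2γ φ_{n-1}(β−1) + γ² R₀^{1−β/α} R_α^{β/α} φ_{n-1}(−1). -/
open MeasureTheory ProbabilityTheory ENNReal

/-- The quadratic form `θ ↦ ⟨θ, Σ^{-α} θ⟩ ∈ [0,∞]` of the spectrally defined power
`Σ^{-α}` of a positive semidefinite operator `Σ = ∑ μ_i b_i ⊗ b_i`. -/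
noncomputable def specPow {H : Type*} [NormedAddCommGroup H] [InnerProductSpace ℝ H]
    (b : HilbertBasis ℕ ℝ H) (μ : ℕ → ℝ) (α : ℝ) (θ : H) : ℝ≥0∞ :=
  ∑' i : ℕ, (ENNReal.ofReal (μ i)) ^ (-α) * ENNReal.ofReal ((inner ℝ θ (b i) : ℝ) ^ 2)

set_option linter.unusedSectionVars false

section AuxLemmas

variable {H : Type*} [NormedAddCommGroup H] [InnerProductSpace ℝ H]

omit [InnerProductSpace ℝ H] in
lemma dummy : True := trivial

variable [CompleteSpace H]

lemma hasSum_inner_sq (b : HilbertBasis ℕ ℝ H) (x : H) :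
    HasSum (fun i => (inner ℝ x (b i) : ℝ) ^ 2) (‖x‖ ^ 2) := by
  have hs := b.hasSum_inner_mul_inner x x
  have : (fun i => (inner ℝ x (b i) : ℝ) * (inner ℝ (b i) x : ℝ))
      = fun i => (inner ℝ x (b i) : ℝ) ^ 2 := by
    funext i; rw [real_inner_comm (b i) x]; ring
  rw [this, real_inner_self_eq_norm_sq] at hs
  exact hs

lemma tsum_ofReal_inner_sq (b : HilbertBasis ℕ ℝ H) (x : H) :
    ∑' i : ℕ, ENNReal.ofReal ((inner ℝ x (b i) : ℝ) ^ 2) = ENNReal.ofReal (‖x‖ ^ 2) := by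
  rw [← (hasSum_inner_sq b x).tsum_eq,
    ← ENNReal.ofReal_tsum_of_nonneg (fun i => sq_nonneg _) (hasSum_inner_sq b x).summable]

lemma rpow_mul_rpow_self {a : ℝ≥0∞} (ha : a ≠ ⊤) {p q : ℝ} (hp : 0 ≤ p) (hq : 0 ≤ q)
    (hpq : p + q = 1) : a ^ p * a ^ q = a := by
  rcases eq_or_ne a 0 with rfl | ha0
  · rcases hp.eq_or_lt with rfl | hp0
    · rw [zero_add] at hpq; subst hpq; simp
    · rw [ENNReal.zero_rpow_of_pos hp0, zero_mul]
  · rw [← ENNReal.rpow_add _ _ ha0 ha, hpq, ENNReal.rpow_one]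

lemma specPow_interp (b : HilbertBasis ℕ ℝ H) (μ : ℕ → ℝ)
    {α β R₀ Rα : ℝ} (hβ0 : 0 ≤ β) (hβα : β ≤ α)
    (hR₀ : 0 ≤ R₀) (hRα : 0 ≤ Rα) (x : H) (hx : ‖x‖ ^ 2 ≤ R₀)
    (hxα : specPow b μ α x ≤ ENNReal.ofReal Rα) :
    specPow b μ β x ≤ ENNReal.ofReal (R₀ ^ (1 - β / α) * Rα ^ (β / α)) := by
  rcases eq_or_lt_of_le (hβ0.trans hβα) with hα0 | hα0
  · obtain rfl : α = 0 := hα0.symm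
    obtain rfl : β = 0 := le_antisymm hβα hβ0
    have he : R₀ ^ (1 - (0:ℝ)/0) * Rα ^ ((0:ℝ)/0) = R₀ := by norm_num
    rw [he]
    have : specPow b μ 0 x = ENNReal.ofReal (‖x‖ ^ 2) := by
      unfold specPow
      simp only [neg_zero, ENNReal.rpow_zero, one_mul]
      exact tsum_ofReal_inner_sq b x
    rw [this]
    exact ENNReal.ofReal_le_ofReal hx
  · set t := β / α with ht_def
    have ht0 : 0 ≤ t := div_nonneg hβ0 hα0.le
    have ht1 : t ≤ 1 := by rw [ht_def, div_le_one hα0]; exact hβα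
    have hp0 : 0 ≤ 1 - t := by linarith
    set a : ℕ → ℝ≥0∞ := fun i => ENNReal.ofReal ((inner ℝ x (b i) : ℝ) ^ 2) with ha_def
    set c : ℕ → ℝ≥0∞ := fun i => ENNReal.ofReal (μ i) with hc_def
    have key : ∀ i, c i ^ (-β) * a i = a i ^ (1 - t) * (c i ^ (-α) * a i) ^ t := by
      intro i
      rw [ENNReal.mul_rpow_of_nonneg _ _ ht0, ← ENNReal.rpow_mul]
      have h1 : -α * t = -β := by rw [ht_def]; field_simp
      rw [h1, mul_comm (a i ^ (1 - t)), mul_assoc,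
        rpow_mul_rpow_self (ENNReal.ofReal_ne_top) ht0 hp0 (by ring)]
    calc specPow b μ β x = ∫⁻ i, a i ^ (1 - t) * (fun j => c j ^ (-α) * a j) i ^ t
          ∂(Measure.count) := by
          rw [MeasureTheory.lintegral_count]; exact tsum_congr key
      _ ≤ (∫⁻ i, a i ∂Measure.count) ^ (1 - t)
          * (∫⁻ i, c i ^ (-α) * a i ∂Measure.count) ^ t :=
          ENNReal.lintegral_mul_norm_pow_le (measurable_of_countable _).aemeasurable
            (measurable_of_countable _).aemeasurable hp0 ht0 (by ring)
      _ = (ENNReal.ofReal (‖x‖ ^ 2)) ^ (1 - t) * (specPow b μ α x) ^ t := by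
          rw [MeasureTheory.lintegral_count, MeasureTheory.lintegral_count,
            tsum_ofReal_inner_sq b x]; rfl
      _ ≤ (ENNReal.ofReal R₀) ^ (1 - t) * (ENNReal.ofReal Rα) ^ t := by
          exact mul_le_mul' (ENNReal.rpow_le_rpow (ENNReal.ofReal_le_ofReal hx) hp0)
            (ENNReal.rpow_le_rpow hxα ht0)
      _ = ENNReal.ofReal (R₀ ^ (1 - t) * Rα ^ t) := by
          rw [ENNReal.ofReal_mul (Real.rpow_nonneg hR₀ _),
            ENNReal.ofReal_rpow_of_nonneg hR₀ hp0, ENNReal.ofReal_rpow_of_nonneg hRα ht0]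

end AuxLemmas

/-- The SGD iterate as an explicit measurable function of the first `n` samples. -/
noncomputable def sgdFun {H : Type*} [NormedAddCommGroup H] [InnerProductSpace ℝ H]
    (θstar : H) (γ : ℝ) : (n : ℕ) → ({x // x ∈ Finset.range (n + 1)} → H) → H
  | 0, _ => 0
  | (n+1), v =>
    sgdFun θstar γ n (fun i => v ⟨i.1,
        Finset.mem_range.2 ((Finset.mem_range.1 i.2).trans (Nat.lt_succ_self _))⟩)
      - (γ * (inner ℝ (sgdFun θstar γ n (fun i => v ⟨i.1,
          Finset.mem_range.2 ((Finset.mem_range.1 i.2).trans (Nat.lt_succ_self _))⟩) - θstar)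
          (v ⟨n + 1, Finset.self_mem_range_succ (n + 1)⟩) : ℝ))
        • v ⟨n + 1, Finset.self_mem_range_succ (n + 1)⟩

lemma sgdFun_measurable {H : Type*} [NormedAddCommGroup H] [InnerProductSpace ℝ H]
    [MeasurableSpace H] [BorelSpace H] [SecondCountableTopology H]
    (θstar : H) (γ : ℝ) : ∀ n, Measurable (sgdFun θstar γ n (H := H)) := by
  intro n
  induction n with
  | zero => exact measurable_const
  | succ n ih =>
    show Measurable fun v => _
    simp only [sgdFun]
    have hres : Measurable fun (v : {x // x ∈ Finset.range (n + 2)} → H) =>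
        (fun i : {x // x ∈ Finset.range (n + 1)} => v ⟨i.1,
          Finset.mem_range.2 ((Finset.mem_range.1 i.2).trans (Nat.lt_succ_self _))⟩) :=
      measurable_pi_lambda _ (fun i => measurable_pi_apply _)
    have h1 : Measurable fun (v : {x // x ∈ Finset.range (n + 2)} → H) =>
        sgdFun θstar γ n (fun i => v ⟨i.1,
          Finset.mem_range.2 ((Finset.mem_range.1 i.2).trans (Nat.lt_succ_self _))⟩) :=
      ih.comp hres
    have h2 : Measurable fun (v : {x // x ∈ Finset.range (n + 2)} → H) =>
        v ⟨n + 1, Finset.self_mem_range_succ (n + 1)⟩ := measurable_pi_apply _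
    exact h1.sub (((measurable_const.mul ((h1.sub measurable_const).inner h2)).smul h2))

set_option maxHeartbeats 2000000 in
/-- Property 2: under the assumptions of Theorem 1, the regularity
functions `φ_n(β) = E⟨θ_n − θ*, Σ^{-β}(θ_n − θ*)⟩` are finite for `β ≤ α` and satisfy,
for `0 ≤ β ≤ α`,
`φ_n(β) ≤ φ_{n-1}(β) − 2γ φ_{n-1}(β−1) + γ² R₀^{1−β/α} R_α^{β/α} φ_{n-1}(−1)`
(stated in rearranged form, valid in `[0,∞]`). -/
theorem sgd_regularity_recurrence
    {H : Type*} [NormedAddCommGroup H] [InnerProductSpace ℝ H] [CompleteSpace H]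
    [MeasurableSpace H] [BorelSpace H] [SecondCountableTopology H]
    {Ω : Type*} [MeasurableSpace Ω] (P : Measure Ω) [IsProbabilityMeasure P]
    (b : HilbertBasis ℕ ℝ H) (μ : ℕ → ℝ) (hμ : ∀ i, 0 ≤ μ i)
    (X : ℕ → Ω → H) (hXmeas : ∀ n, Measurable (X n))
    (hindep : iIndepFun (m := fun _ => ‹MeasurableSpace H›) X P)
    (hident : ∀ n, IdentDistrib (X n) (X 0) P P)
    (hcov : ∀ i j, (∫ ω, (inner ℝ (X 0 ω) (b i) : ℝ) * (inner ℝ (X 0 ω) (b j) : ℝ) ∂P)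
      = if i = j then μ i else 0)
    (θstar : H) (α γ R₀ Rα : ℝ) (hα : 0 ≤ α) (hR₀ : 0 ≤ R₀) (hRα : 0 ≤ Rα)
    (hbound : ∀ n, ∀ᵐ ω ∂P, ‖X n ω‖ ^ 2 ≤ R₀)
    (hsrc : specPow b μ α θstar ≠ ⊤)
    (hreg : ∀ n, ∀ᵐ ω ∂P, specPow b μ α (X n ω) ≤ ENNReal.ofReal Rα)
    (hγ0 : 0 < γ) (hγ : γ ≤ 1 / R₀)
    (θ : ℕ → Ω → H) (h0 : ∀ ω, θ 0 ω = 0)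
    (hrec : ∀ n ω, θ (n + 1) ω = θ n ω
      - (γ * (inner ℝ (θ n ω - θstar) (X (n + 1) ω) : ℝ)) • X (n + 1) ω) :
    (∀ (n : ℕ) (β : ℝ), β ≤ α →
        (∫⁻ ω, specPow b μ β (θ n ω - θstar) ∂P) ≠ ⊤) ∧
      ∀ (n : ℕ) (β : ℝ), 0 ≤ β → β ≤ α →
        (∫⁻ ω, specPow b μ β (θ (n + 1) ω - θstar) ∂P)
            + ENNReal.ofReal (2 * γ) * (∫⁻ ω, specPow b μ (β - 1) (θ n ω - θstar) ∂P)
          ≤ (∫⁻ ω, specPow b μ β (θ n ω - θstar) ∂P)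
            + ENNReal.ofReal (γ ^ 2 * R₀ ^ (1 - β / α) * Rα ^ (β / α))
              * (∫⁻ ω, specPow b μ (-1 : ℝ) (θ n ω - θstar) ∂P) := by
  classical
  have hbnorm : ∀ j, ‖b j‖ = 1 := fun j => b.orthonormal.1 j
  have habs : ∀ (v : H) (j : ℕ), |(inner ℝ v (b j) : ℝ)| ≤ ‖v‖ := fun v j => by
    simpa [hbnorm j] using abs_real_inner_le_norm v (b j)
  -- γ * R₀ ≤ 1
  have hγR : γ * R₀ ≤ 1 := by
    rcases eq_or_lt_of_le hR₀ with h | h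
    · rw [← h]; norm_num
    · rw [div_eq_mul_inv, one_mul] at hγ
      calc γ * R₀ ≤ R₀⁻¹ * R₀ := by gcongr
        _ = 1 := inv_mul_cancel₀ h.ne'
  -- measurability of the iterates
  have hmθ : ∀ n, Measurable (θ n) := by
    intro n
    induction n with
    | zero =>
      have : θ 0 = fun _ => (0 : H) := funext h0
      rw [this]; exact measurable_const
    | succ n ih =>
      have : θ (n + 1) = fun ω => θ n ω
          - (γ * (inner ℝ (θ n ω - θstar) (X (n + 1) ω) : ℝ)) • X (n + 1) ω :=
        funext (hrec n)
      rw [this]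
      exact ih.sub ((measurable_const.mul
        ((ih.sub measurable_const).inner (hXmeas (n + 1)))).smul (hXmeas (n + 1)))
  have hmA : ∀ n j, Measurable fun ω => (inner ℝ (θ n ω - θstar) (b j) : ℝ) :=
    fun n j => ((hmθ n).sub measurable_const).inner measurable_const
  have hmB : ∀ n, Measurable fun ω => (inner ℝ (θ n ω - θstar) (X (n + 1) ω) : ℝ) :=
    fun n => ((hmθ n).sub measurable_const).inner (hXmeas (n + 1))
  have hmC : ∀ m j, Measurable fun ω => (inner ℝ (X m ω) (b j) : ℝ) :=
    fun m j => (hXmeas m).inner measurable_const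
  -- integrability from boundedness
  have intOfBound : ∀ (K : ℝ) (g : Ω → ℝ), Measurable g → (∀ᵐ ω ∂P, |g ω| ≤ K) →
      Integrable g P := fun K g hg hb =>
    ⟨hg.aestronglyMeasurable,
      MeasureTheory.HasFiniteIntegral.of_bounded (C := K) (by simpa [Real.norm_eq_abs] using hb)⟩
  -- a.s. contraction bound
  have hnormθ : ∀ n, ∀ᵐ ω ∂P, ‖θ n ω - θstar‖ ≤ ‖θstar‖ := by
    intro n
    induction n with
    | zero =>
      refine Filter.Eventually.of_forall fun ω => ?_
      rw [h0]; simp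
    | succ n ih =>
      filter_upwards [ih, hbound (n + 1)] with ω h1 h2
      rw [hrec n ω, sub_right_comm]
      set η := θ n ω - θstar with hη
      set x := X (n + 1) ω with hx
      set s : ℝ := (inner ℝ η x : ℝ) with hs
      have hsq : ‖η - (γ * s) • x‖ ^ 2 ≤ ‖η‖ ^ 2 := by
        rw [norm_sub_sq_real, real_inner_smul_right, norm_smul, Real.norm_eq_abs, mul_pow,
          sq_abs]
        have e1 : γ ^ 2 * s ^ 2 * ‖x‖ ^ 2 ≤ γ ^ 2 * s ^ 2 * R₀ :=
          mul_le_mul_of_nonneg_left h2 (by positivity)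
        have e3 : (γ * R₀) * (γ * s ^ 2) ≤ 1 * (γ * s ^ 2) :=
          mul_le_mul_of_nonneg_right hγR (by positivity)
        nlinarith [sq_nonneg s, hγ0.le]
      nlinarith [norm_nonneg (η - (γ * s) • x), norm_nonneg η, norm_nonneg θstar]
  -- μ i ≤ R₀
  have hcov' : ∀ m j k, (∫ ω, (inner ℝ (X m ω) (b j) : ℝ) * (inner ℝ (X m ω) (b k) : ℝ) ∂P)
      = if j = k then μ j else 0 := by
    intro m j k
    have hφ : Measurable fun x : H => (inner ℝ x (b j) : ℝ) * (inner ℝ x (b k) : ℝ) :=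
      (measurable_id.inner measurable_const).mul (measurable_id.inner measurable_const)
    have hid := (hident m).comp hφ
    rw [show (fun ω => (inner ℝ (X m ω) (b j) : ℝ) * (inner ℝ (X m ω) (b k) : ℝ))
        = (fun x : H => (inner ℝ x (b j) : ℝ) * (inner ℝ x (b k) : ℝ)) ∘ (X m) from rfl] at *
    rw [hid.integral_eq]
    exact hcov j k
  have hμR₀ : ∀ i, μ i ≤ R₀ := by
    intro i
    have hint : Integrable (fun ω => (inner ℝ (X 0 ω) (b i) : ℝ) * (inner ℝ (X 0 ω) (b i) : ℝ)) P := by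
      refine intOfBound R₀ _ ((hmC 0 i).mul (hmC 0 i)) ?_
      filter_upwards [hbound 0] with ω h2
      rw [abs_mul]
      calc |(inner ℝ (X 0 ω) (b i) : ℝ)| * |(inner ℝ (X 0 ω) (b i) : ℝ)|
          ≤ ‖X 0 ω‖ * ‖X 0 ω‖ := by
            exact mul_le_mul (habs _ _) (habs _ _) (abs_nonneg _) (norm_nonneg _)
        _ = ‖X 0 ω‖ ^ 2 := by ring
        _ ≤ R₀ := h2
    have h1 : μ i = ∫ ω, (inner ℝ (X 0 ω) (b i) : ℝ) * (inner ℝ (X 0 ω) (b i) : ℝ) ∂P := by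
      rw [hcov i i, if_pos rfl]
    rw [h1]
    calc (∫ ω, (inner ℝ (X 0 ω) (b i) : ℝ) * (inner ℝ (X 0 ω) (b i) : ℝ) ∂P)
        ≤ ∫ _, R₀ ∂P := by
          refine integral_mono_ae hint (integrable_const _) ?_
          filter_upwards [hbound 0] with ω h2
          calc (inner ℝ (X 0 ω) (b i) : ℝ) * (inner ℝ (X 0 ω) (b i) : ℝ)
              ≤ |(inner ℝ (X 0 ω) (b i) : ℝ)| * |(inner ℝ (X 0 ω) (b i) : ℝ)| := by
                rw [← abs_mul]; exact le_abs_self _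
            _ ≤ ‖X 0 ω‖ * ‖X 0 ω‖ :=
                mul_le_mul (habs _ _) (habs _ _) (abs_nonneg _) (norm_nonneg _)
            _ = ‖X 0 ω‖ ^ 2 := by ring
            _ ≤ R₀ := h2
      _ = R₀ := by simp
  -- independence of θ n and X (n+1)
  have θeq : ∀ n ω, θ n ω = sgdFun θstar γ n (fun i => X i.1 ω) := by
    intro n
    induction n with
    | zero => intro ω; rw [h0]; rfl
    | succ n ih =>
      intro ω
      rw [hrec n ω]
      simp only [sgdFun]
      rw [← ih ω]
  have hIndep : ∀ n, IndepFun (θ n) (X (n + 1)) P := by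
    intro n
    have hdisj : Disjoint (Finset.range (n + 1)) ({n + 1} : Finset ℕ) := by
      simp [Finset.disjoint_singleton_right]
    have base := hindep.indepFun_finset (Finset.range (n + 1)) {n + 1} hdisj hXmeas
    have comp := base.comp (sgdFun_measurable θstar γ n)
      (measurable_pi_apply (⟨n + 1, Finset.mem_singleton_self _⟩ : {x // x ∈ ({n+1} : Finset ℕ)}))
    have e1 : (sgdFun θstar γ n) ∘ (fun a (i : {x // x ∈ Finset.range (n + 1)}) => X i.1 a)
        = θ n := by
      funext ω; exact (θeq n ω).symm
    have e2 : (fun v : {x // x ∈ ({n+1} : Finset ℕ)} → H =>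
          v ⟨n + 1, Finset.mem_singleton_self _⟩)
        ∘ (fun a (i : {x // x ∈ ({n+1} : Finset ℕ)}) => X i.1 a) = X (n + 1) := rfl
    rw [e1, e2] at comp
    exact comp
  -- Bessel / Cauchy-Schwarz for partial sums
  have bessel : ∀ (y : H) (N : ℕ),
      (∑ j ∈ Finset.range N, (inner ℝ y (b j) : ℝ) ^ 2) ≤ ‖y‖ ^ 2 := by
    intro y N
    have := b.orthonormal.sum_inner_products_le (s := Finset.range N) y
    simpa [Real.norm_eq_abs, sq_abs, real_inner_comm] using this
  have hCS : ∀ (y x : H) (N : ℕ),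
      |∑ j ∈ Finset.range N, (inner ℝ y (b j) : ℝ) * (inner ℝ x (b j) : ℝ)| ≤ ‖y‖ * ‖x‖ := by
    intro y x N
    have h1 : (∑ j ∈ Finset.range N, (inner ℝ y (b j) : ℝ) * (inner ℝ x (b j) : ℝ)) ^ 2
        ≤ (‖y‖ * ‖x‖) ^ 2 := by
      calc (∑ j ∈ Finset.range N, (inner ℝ y (b j) : ℝ) * (inner ℝ x (b j) : ℝ)) ^ 2
          ≤ (∑ j ∈ Finset.range N, (inner ℝ y (b j) : ℝ) ^ 2)
            * (∑ j ∈ Finset.range N, (inner ℝ x (b j) : ℝ) ^ 2) :=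
            Finset.sum_mul_sq_le_sq_mul_sq _ _ _
        _ ≤ ‖y‖ ^ 2 * ‖x‖ ^ 2 := mul_le_mul (bessel y N) (bessel x N)
            (Finset.sum_nonneg fun _ _ => sq_nonneg _) (sq_nonneg _)
        _ = (‖y‖ * ‖x‖) ^ 2 := by ring
    nlinarith [abs_nonneg (∑ j ∈ Finset.range N, (inner ℝ y (b j) : ℝ) * (inner ℝ x (b j) : ℝ)),
      mul_nonneg (norm_nonneg y) (norm_nonneg x),
      sq_abs (∑ j ∈ Finset.range N, (inner ℝ y (b j) : ℝ) * (inner ℝ x (b j) : ℝ))]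
  -- coordinate expansion of the lintegral of specPow
  have hmOfA2 : ∀ n j, Measurable fun ω =>
      ENNReal.ofReal ((inner ℝ (θ n ω - θstar) (b j) : ℝ) ^ 2) :=
    fun n j => ((hmA n j).pow_const 2).ennreal_ofReal
  have hΦ : ∀ (n : ℕ) (β : ℝ), (∫⁻ ω, specPow b μ β (θ n ω - θstar) ∂P)
      = ∑' j, (ENNReal.ofReal (μ j)) ^ (-β) *
          ∫⁻ ω, ENNReal.ofReal ((inner ℝ (θ n ω - θstar) (b j) : ℝ) ^ 2) ∂P := by
    intro n β
    unfold specPow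
    rw [lintegral_tsum (fun j => ((hmOfA2 n j).const_mul _).aemeasurable)]
    exact tsum_congr fun j => lintegral_const_mul _ (hmOfA2 n j)
  have hintA2 : ∀ n j, Integrable (fun ω => (inner ℝ (θ n ω - θstar) (b j) : ℝ) ^ 2) P := by
    intro n j
    refine intOfBound (‖θstar‖ ^ 2) _ ((hmA n j).pow_const 2) ?_
    filter_upwards [hnormθ n] with ω h1
    rw [abs_of_nonneg (sq_nonneg _)]
    have h2 := habs (θ n ω - θstar) j
    nlinarith [sq_abs (inner ℝ (θ n ω - θstar) (b j) : ℝ),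
      abs_nonneg (inner ℝ (θ n ω - θstar) (b j) : ℝ), norm_nonneg (θ n ω - θstar),
      norm_nonneg θstar]
  have hF_ofReal : ∀ n j, (∫⁻ ω, ENNReal.ofReal ((inner ℝ (θ n ω - θstar) (b j) : ℝ) ^ 2) ∂P)
      = ENNReal.ofReal (∫ ω, (inner ℝ (θ n ω - θstar) (b j) : ℝ) ^ 2 ∂P) :=
    fun n j => (ofReal_integral_eq_lintegral_ofReal (hintA2 n j)
      (Filter.Eventually.of_forall fun ω => sq_nonneg _)).symm
  -- convergence of partial sums of the inner ℝ product
  have hBtend : ∀ n ω, Filter.Tendsto (fun N => ∑ j ∈ Finset.range N,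
      (inner ℝ (θ n ω - θstar) (b j) : ℝ) * (inner ℝ (X (n + 1) ω) (b j) : ℝ)) Filter.atTop
      (nhds (inner ℝ (θ n ω - θstar) (X (n + 1) ω) : ℝ)) := by
    intro n ω
    have h1 := b.hasSum_inner_mul_inner (θ n ω - θstar) (X (n + 1) ω)
    have h2 : (fun j => (inner ℝ (θ n ω - θstar) (b j) : ℝ) * (inner ℝ (b j) (X (n + 1) ω) : ℝ))
        = fun j => (inner ℝ (θ n ω - θstar) (b j) : ℝ) * (inner ℝ (X (n + 1) ω) (b j) : ℝ) := by
      funext j; rw [real_inner_comm (b j) (X (n + 1) ω)]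
    rw [h2] at h1
    exact h1.tendsto_sum_nat
  -- independence: factorization of integrals
  have hindmul : ∀ (n : ℕ) (φ ψ : H → ℝ), Measurable φ → Measurable ψ →
      (∫ ω, φ (θ n ω) * ψ (X (n + 1) ω) ∂P)
        = (∫ ω, φ (θ n ω) ∂P) * ∫ ω, ψ (X (n + 1) ω) ∂P := by
    intro n φ ψ hφ hψ
    exact ((hIndep n).comp hφ hψ).integral_fun_mul_eq_mul_integral (hφ.comp (hmθ n)).aestronglyMeasurable
      (hψ.comp (hXmeas (n + 1))).aestronglyMeasurable
  -- the basic factorized term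
  have htermval : ∀ (n : ℕ) (i j : ℕ),
      (∫ ω, ((inner ℝ (θ n ω - θstar) (b i) : ℝ) * (inner ℝ (θ n ω - θstar) (b j) : ℝ))
        * ((inner ℝ (X (n + 1) ω) (b j) : ℝ) * (inner ℝ (X (n + 1) ω) (b i) : ℝ)) ∂P)
      = (∫ ω, (inner ℝ (θ n ω - θstar) (b i) : ℝ) * (inner ℝ (θ n ω - θstar) (b j) : ℝ) ∂P)
        * (if j = i then μ j else 0) := by
    intro n i j
    have h := hindmul n (fun h => (inner ℝ (h - θstar) (b i) : ℝ) * (inner ℝ (h - θstar) (b j) : ℝ))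
      (fun x => (inner ℝ x (b j) : ℝ) * (inner ℝ x (b i) : ℝ))
      (((measurable_id.sub measurable_const).inner measurable_const).mul
        ((measurable_id.sub measurable_const).inner measurable_const))
      ((measurable_id.inner measurable_const).mul (measurable_id.inner measurable_const))
    beta_reduce at h
    rw [hcov' (n + 1) j i] at h
    exact h
  have hintTerm : ∀ (n : ℕ) (i j : ℕ), Integrable (fun ω =>
      ((inner ℝ (θ n ω - θstar) (b i) : ℝ) * (inner ℝ (θ n ω - θstar) (b j) : ℝ))
        * ((inner ℝ (X (n + 1) ω) (b j) : ℝ) * (inner ℝ (X (n + 1) ω) (b i) : ℝ))) P := by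
    intro n i j
    refine intOfBound (‖θstar‖ ^ 2 * R₀) _
      (((hmA n i).mul (hmA n j)).mul ((hmC (n + 1) j).mul (hmC (n + 1) i))) ?_
    filter_upwards [hnormθ n, hbound (n + 1)] with ω h1 h2
    have e1 := habs (θ n ω - θstar) i
    have e2 := habs (θ n ω - θstar) j
    have e3 := habs (X (n + 1) ω) j
    have e4 := habs (X (n + 1) ω) i
    rw [abs_mul, abs_mul, abs_mul]
    have m1 : |(inner ℝ (θ n ω - θstar) (b i) : ℝ)| * |(inner ℝ (θ n ω - θstar) (b j) : ℝ)|
        ≤ ‖θstar‖ ^ 2 := by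
      nlinarith [abs_nonneg (inner ℝ (θ n ω - θstar) (b i) : ℝ),
        abs_nonneg (inner ℝ (θ n ω - θstar) (b j) : ℝ), norm_nonneg (θ n ω - θstar),
        norm_nonneg θstar, habs (θ n ω - θstar) i, habs (θ n ω - θstar) j]
    have m2 : |(inner ℝ (X (n + 1) ω) (b j) : ℝ)| * |(inner ℝ (X (n + 1) ω) (b i) : ℝ)| ≤ R₀ := by
      nlinarith [abs_nonneg (inner ℝ (X (n + 1) ω) (b j) : ℝ),
        abs_nonneg (inner ℝ (X (n + 1) ω) (b i) : ℝ), norm_nonneg (X (n + 1) ω),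
        habs (X (n + 1) ω) i, habs (X (n + 1) ω) j]
    exact mul_le_mul m1 m2 (mul_nonneg (abs_nonneg _) (abs_nonneg _)) (by positivity)
  -- cross term
  have crossInt : ∀ (n : ℕ) (i : ℕ), (∫ ω, (inner ℝ (θ n ω - θstar) (b i) : ℝ) *
        (inner ℝ (θ n ω - θstar) (X (n + 1) ω) : ℝ) * (inner ℝ (X (n + 1) ω) (b i) : ℝ) ∂P)
      = μ i * ∫ ω, (inner ℝ (θ n ω - θstar) (b i) : ℝ) ^ 2 ∂P := by
    intro n i
    set FN : ℕ → Ω → ℝ := fun N ω => (inner ℝ (θ n ω - θstar) (b i) : ℝ) *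
      (∑ j ∈ Finset.range N,
        (inner ℝ (θ n ω - θstar) (b j) : ℝ) * (inner ℝ (X (n + 1) ω) (b j) : ℝ)) *
      (inner ℝ (X (n + 1) ω) (b i) : ℝ) with hFN
    have hFNmeas : ∀ N, AEStronglyMeasurable (FN N) P := fun N =>
      (((hmA n i).mul (Finset.measurable_sum _
        (fun j _ => (hmA n j).mul (hmC (n + 1) j)))).mul (hmC (n + 1) i)).aestronglyMeasurable
    have hFNbound : ∀ N, ∀ᵐ ω ∂P, ‖FN N ω‖ ≤ ‖θstar‖ ^ 2 * R₀ := by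
      intro N
      filter_upwards [hnormθ n, hbound (n + 1)] with ω h1 h2
      rw [Real.norm_eq_abs, hFN]
      have e1 := habs (θ n ω - θstar) i
      have e2 := habs (X (n + 1) ω) i
      have e3 := hCS (θ n ω - θstar) (X (n + 1) ω) N
      rw [abs_mul, abs_mul]
      have m1 : |(inner ℝ (θ n ω - θstar) (b i) : ℝ)| * |∑ j ∈ Finset.range N,
          (inner ℝ (θ n ω - θstar) (b j) : ℝ) * (inner ℝ (X (n + 1) ω) (b j) : ℝ)|
          ≤ ‖θ n ω - θstar‖ * (‖θ n ω - θstar‖ * ‖X (n + 1) ω‖) :=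
        mul_le_mul e1 e3 (abs_nonneg _) (norm_nonneg _)
      have m2 : |(inner ℝ (θ n ω - θstar) (b i) : ℝ)| * |∑ j ∈ Finset.range N,
          (inner ℝ (θ n ω - θstar) (b j) : ℝ) * (inner ℝ (X (n + 1) ω) (b j) : ℝ)|
            * |(inner ℝ (X (n + 1) ω) (b i) : ℝ)|
          ≤ (‖θ n ω - θstar‖ * (‖θ n ω - θstar‖ * ‖X (n + 1) ω‖)) * ‖X (n + 1) ω‖ :=
        mul_le_mul m1 e2 (abs_nonneg _) (by positivity)
      calc |(inner ℝ (θ n ω - θstar) (b i) : ℝ)| * |∑ j ∈ Finset.range N,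
          (inner ℝ (θ n ω - θstar) (b j) : ℝ) * (inner ℝ (X (n + 1) ω) (b j) : ℝ)|
            * |(inner ℝ (X (n + 1) ω) (b i) : ℝ)|
          ≤ (‖θ n ω - θstar‖ * (‖θ n ω - θstar‖ * ‖X (n + 1) ω‖)) * ‖X (n + 1) ω‖ := m2
        _ = (‖θ n ω - θstar‖ * ‖θ n ω - θstar‖) * (‖X (n + 1) ω‖ * ‖X (n + 1) ω‖) := by
            ring
        _ ≤ ‖θstar‖ ^ 2 * R₀ := by
            have q1 : ‖θ n ω - θstar‖ * ‖θ n ω - θstar‖ ≤ ‖θstar‖ ^ 2 := by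
              nlinarith [norm_nonneg (θ n ω - θstar), norm_nonneg θstar]
            have q2 : ‖X (n + 1) ω‖ * ‖X (n + 1) ω‖ ≤ R₀ := by
              nlinarith [norm_nonneg (X (n + 1) ω)]
            exact mul_le_mul q1 q2 (by positivity) (by positivity)
    have hDCT := tendsto_integral_of_dominated_convergence
      (bound := fun _ => ‖θstar‖ ^ 2 * R₀) hFNmeas (integrable_const _) hFNbound
      (Filter.Eventually.of_forall fun ω => ((hBtend n ω).const_mul _).mul_const _)
    have hval : ∀ N, i < N → (∫ ω, FN N ω ∂P)
        = μ i * ∫ ω, (inner ℝ (θ n ω - θstar) (b i) : ℝ) ^ 2 ∂P := by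
      intro N hN
      have e : ∀ ω, FN N ω = ∑ j ∈ Finset.range N,
          ((inner ℝ (θ n ω - θstar) (b i) : ℝ) * (inner ℝ (θ n ω - θstar) (b j) : ℝ))
            * ((inner ℝ (X (n + 1) ω) (b j) : ℝ) * (inner ℝ (X (n + 1) ω) (b i) : ℝ)) := by
        intro ω
        simp only [hFN, Finset.mul_sum, Finset.sum_mul]
        exact Finset.sum_congr rfl fun j _ => by ring
      rw [integral_congr_ae (Filter.Eventually.of_forall e),
        integral_finset_sum _ (fun j _ => hintTerm n i j)]
      rw [Finset.sum_congr rfl (fun j _ => htermval n i j)]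
      rw [Finset.sum_eq_single_of_mem i (Finset.mem_range.2 hN)]
      · rw [if_pos rfl]
        have : (fun ω => (inner ℝ (θ n ω - θstar) (b i) : ℝ) * (inner ℝ (θ n ω - θstar) (b i) : ℝ))
            = fun ω => (inner ℝ (θ n ω - θstar) (b i) : ℝ) ^ 2 := by
          funext ω; ring
        rw [this, mul_comm]
      · intro j _ hji
        rw [if_neg hji, mul_zero]
    have hconst : Filter.Tendsto (fun N => ∫ ω, FN N ω ∂P) Filter.atTop
        (nhds (μ i * ∫ ω, (inner ℝ (θ n ω - θstar) (b i) : ℝ) ^ 2 ∂P)) := by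
      refine Filter.Tendsto.congr' ?_ tendsto_const_nhds
      filter_upwards [Filter.eventually_atTop.2 ⟨i + 1, fun N hN => hN⟩] with N hN
      exact (hval N hN).symm
    exact tendsto_nhds_unique hDCT hconst
  -- integrability of ⟪η, X⟫²
  have hintB2 : ∀ n, Integrable (fun ω => (inner ℝ (θ n ω - θstar) (X (n + 1) ω) : ℝ) ^ 2) P := by
    intro n
    refine intOfBound (‖θstar‖ ^ 2 * R₀) _ ((hmB n).pow_const 2) ?_
    filter_upwards [hnormθ n, hbound (n + 1)] with ω h1 h2
    rw [abs_of_nonneg (sq_nonneg _)]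
    have e0 := abs_real_inner_le_norm (θ n ω - θstar) (X (n + 1) ω)
    calc (inner ℝ (θ n ω - θstar) (X (n + 1) ω) : ℝ) ^ 2
        = |(inner ℝ (θ n ω - θstar) (X (n + 1) ω) : ℝ)| ^ 2 := (sq_abs _).symm
      _ ≤ (‖θ n ω - θstar‖ * ‖X (n + 1) ω‖) ^ 2 := by
          exact pow_le_pow_left₀ (abs_nonneg _) e0 2
      _ = ‖θ n ω - θstar‖ ^ 2 * ‖X (n + 1) ω‖ ^ 2 := by ring
      _ ≤ ‖θstar‖ ^ 2 * R₀ := by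
          exact mul_le_mul (pow_le_pow_left₀ (norm_nonneg _) h1 2) h2 (sq_nonneg _) (sq_nonneg _)
  -- value of ∫ (S N)²
  have hBsqval : ∀ n N, (∫ ω, (∑ j ∈ Finset.range N,
        (inner ℝ (θ n ω - θstar) (b j) : ℝ) * (inner ℝ (X (n + 1) ω) (b j) : ℝ)) ^ 2 ∂P)
      = ∑ j ∈ Finset.range N, μ j * ∫ ω, (inner ℝ (θ n ω - θstar) (b j) : ℝ) ^ 2 ∂P := by
    intro n N
    have e : ∀ ω, (∑ j ∈ Finset.range N,
          (inner ℝ (θ n ω - θstar) (b j) : ℝ) * (inner ℝ (X (n + 1) ω) (b j) : ℝ)) ^ 2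
        = ∑ j ∈ Finset.range N, ∑ k ∈ Finset.range N,
          ((inner ℝ (θ n ω - θstar) (b j) : ℝ) * (inner ℝ (θ n ω - θstar) (b k) : ℝ))
            * ((inner ℝ (X (n + 1) ω) (b k) : ℝ) * (inner ℝ (X (n + 1) ω) (b j) : ℝ)) := by
      intro ω
      rw [sq, Finset.sum_mul_sum]
      exact Finset.sum_congr rfl fun j _ => Finset.sum_congr rfl fun k _ => by ring
    rw [integral_congr_ae (Filter.Eventually.of_forall e),
      integral_finset_sum _ (fun j _ => integrable_finset_sum _ (fun k _ => hintTerm n j k))]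
    refine Finset.sum_congr rfl fun j hj => ?_
    rw [integral_finset_sum _ (fun k _ => hintTerm n j k),
      Finset.sum_congr rfl (fun k _ => htermval n j k),
      Finset.sum_eq_single_of_mem j hj]
    · rw [if_pos rfl]
      have : (fun ω => (inner ℝ (θ n ω - θstar) (b j) : ℝ) * (inner ℝ (θ n ω - θstar) (b j) : ℝ))
          = fun ω => (inner ℝ (θ n ω - θstar) (b j) : ℝ) ^ 2 := by funext ω; ring
      rw [this, mul_comm]
    · intro k _ hkj
      rw [if_neg hkj, mul_zero]
  -- E⟪η,X⟫² is dominated by Φ_n(-1)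
  have hBsq : ∀ n, (∫⁻ ω, ENNReal.ofReal ((inner ℝ (θ n ω - θstar) (X (n + 1) ω) : ℝ) ^ 2) ∂P)
      ≤ ∑' j, ENNReal.ofReal (μ j)
          * ∫⁻ ω, ENNReal.ofReal ((inner ℝ (θ n ω - θstar) (b j) : ℝ) ^ 2) ∂P := by
    intro n
    rw [← ofReal_integral_eq_lintegral_ofReal (hintB2 n)
      (Filter.Eventually.of_forall fun ω => sq_nonneg _)]
    have hSmeas : ∀ N : ℕ, AEStronglyMeasurable (fun ω => (∑ j ∈ Finset.range N,
        (inner ℝ (θ n ω - θstar) (b j) : ℝ) * (inner ℝ (X (n + 1) ω) (b j) : ℝ)) ^ 2) P :=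
      fun N => ((Finset.measurable_sum _
        (fun j _ => (hmA n j).mul (hmC (n + 1) j))).pow_const 2).aestronglyMeasurable
    have hSbound : ∀ N : ℕ, ∀ᵐ ω ∂P, ‖(∑ j ∈ Finset.range N,
        (inner ℝ (θ n ω - θstar) (b j) : ℝ) * (inner ℝ (X (n + 1) ω) (b j) : ℝ)) ^ 2‖
        ≤ ‖θstar‖ ^ 2 * R₀ := by
      intro N
      filter_upwards [hnormθ n, hbound (n + 1)] with ω h1 h2
      rw [Real.norm_eq_abs, abs_of_nonneg (sq_nonneg _)]
      have e3 := hCS (θ n ω - θstar) (X (n + 1) ω) N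
      calc (∑ j ∈ Finset.range N,
          (inner ℝ (θ n ω - θstar) (b j) : ℝ) * (inner ℝ (X (n + 1) ω) (b j) : ℝ)) ^ 2
          = |∑ j ∈ Finset.range N,
            (inner ℝ (θ n ω - θstar) (b j) : ℝ) * (inner ℝ (X (n + 1) ω) (b j) : ℝ)| ^ 2 :=
            (sq_abs _).symm
        _ ≤ (‖θ n ω - θstar‖ * ‖X (n + 1) ω‖) ^ 2 := pow_le_pow_left₀ (abs_nonneg _) e3 2
        _ = ‖θ n ω - θstar‖ ^ 2 * ‖X (n + 1) ω‖ ^ 2 := by ring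
        _ ≤ ‖θstar‖ ^ 2 * R₀ :=
            mul_le_mul (pow_le_pow_left₀ (norm_nonneg _) h1 2) h2 (sq_nonneg _) (sq_nonneg _)
    have hDCT := tendsto_integral_of_dominated_convergence
      (bound := fun _ => ‖θstar‖ ^ 2 * R₀) hSmeas (integrable_const _) hSbound
      (Filter.Eventually.of_forall fun ω => (hBtend n ω).pow 2)
    refine le_of_tendsto' (ENNReal.tendsto_ofReal hDCT) fun N => ?_
    rw [hBsqval n N, ENNReal.ofReal_sum_of_nonneg
      (fun j _ => mul_nonneg (hμ j) (integral_nonneg fun ω => sq_nonneg _))]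
    refine le_trans (le_of_eq (Finset.sum_congr rfl fun j _ => ?_)) (ENNReal.sum_le_tsum _)
    rw [ENNReal.ofReal_mul (hμ j), hF_ofReal n j]
  -- the per-coordinate recurrence identity
  have maineq : ∀ n i,
      (∫⁻ ω, ENNReal.ofReal ((inner ℝ (θ (n + 1) ω - θstar) (b i) : ℝ) ^ 2) ∂P)
        + ENNReal.ofReal (2 * γ) * (ENNReal.ofReal (μ i)
          * ∫⁻ ω, ENNReal.ofReal ((inner ℝ (θ n ω - θstar) (b i) : ℝ) ^ 2) ∂P)
      = (∫⁻ ω, ENNReal.ofReal ((inner ℝ (θ n ω - θstar) (b i) : ℝ) ^ 2) ∂P)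
        + ENNReal.ofReal (γ ^ 2) * ∫⁻ ω, ENNReal.ofReal
          ((inner ℝ (θ n ω - θstar) (X (n + 1) ω) : ℝ) ^ 2
            * (inner ℝ (X (n + 1) ω) (b i) : ℝ) ^ 2) ∂P := by
    intro n i
    have hpt : ∀ ω, (inner ℝ (θ (n + 1) ω - θstar) (b i) : ℝ)
        = (inner ℝ (θ n ω - θstar) (b i) : ℝ)
          - γ * (inner ℝ (θ n ω - θstar) (X (n + 1) ω) : ℝ) * (inner ℝ (X (n + 1) ω) (b i) : ℝ) := by
      intro ω
      rw [hrec n ω, sub_right_comm, inner_sub_left, real_inner_smul_left]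
    have intABC : Integrable (fun ω => (inner ℝ (θ n ω - θstar) (b i) : ℝ)
        * (inner ℝ (θ n ω - θstar) (X (n + 1) ω) : ℝ) * (inner ℝ (X (n + 1) ω) (b i) : ℝ)) P := by
      refine intOfBound (‖θstar‖ ^ 2 * R₀) _ (((hmA n i).mul (hmB n)).mul (hmC (n + 1) i)) ?_
      filter_upwards [hnormθ n, hbound (n + 1)] with ω h1 h2
      have e1 := habs (θ n ω - θstar) i
      have e2 := habs (X (n + 1) ω) i
      have e3 := abs_real_inner_le_norm (θ n ω - θstar) (X (n + 1) ω)
      rw [abs_mul, abs_mul]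
      have m1 : |(inner ℝ (θ n ω - θstar) (b i) : ℝ)|
            * |(inner ℝ (θ n ω - θstar) (X (n + 1) ω) : ℝ)|
          ≤ ‖θ n ω - θstar‖ * (‖θ n ω - θstar‖ * ‖X (n + 1) ω‖) :=
        mul_le_mul e1 e3 (abs_nonneg _) (norm_nonneg _)
      have m2 : |(inner ℝ (θ n ω - θstar) (b i) : ℝ)|
            * |(inner ℝ (θ n ω - θstar) (X (n + 1) ω) : ℝ)| * |(inner ℝ (X (n + 1) ω) (b i) : ℝ)|
          ≤ (‖θ n ω - θstar‖ * (‖θ n ω - θstar‖ * ‖X (n + 1) ω‖)) * ‖X (n + 1) ω‖ :=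
        mul_le_mul m1 e2 (abs_nonneg _) (by positivity)
      calc |(inner ℝ (θ n ω - θstar) (b i) : ℝ)|
            * |(inner ℝ (θ n ω - θstar) (X (n + 1) ω) : ℝ)| * |(inner ℝ (X (n + 1) ω) (b i) : ℝ)|
          ≤ (‖θ n ω - θstar‖ * (‖θ n ω - θstar‖ * ‖X (n + 1) ω‖)) * ‖X (n + 1) ω‖ := m2
        _ = (‖θ n ω - θstar‖ * ‖θ n ω - θstar‖) * (‖X (n + 1) ω‖ * ‖X (n + 1) ω‖) := by ring
        _ ≤ ‖θstar‖ ^ 2 * R₀ := by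
            have q1 : ‖θ n ω - θstar‖ * ‖θ n ω - θstar‖ ≤ ‖θstar‖ ^ 2 := by
              nlinarith [norm_nonneg (θ n ω - θstar), norm_nonneg θstar]
            have q2 : ‖X (n + 1) ω‖ * ‖X (n + 1) ω‖ ≤ R₀ := by
              nlinarith [norm_nonneg (X (n + 1) ω)]
            exact mul_le_mul q1 q2 (by positivity) (by positivity)
    have intB2C2 : Integrable (fun ω => (inner ℝ (θ n ω - θstar) (X (n + 1) ω) : ℝ) ^ 2
        * (inner ℝ (X (n + 1) ω) (b i) : ℝ) ^ 2) P := by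
      refine intOfBound ((‖θstar‖ ^ 2 * R₀) * R₀) _
        (((hmB n).pow_const 2).mul ((hmC (n + 1) i).pow_const 2)) ?_
      filter_upwards [hnormθ n, hbound (n + 1)] with ω h1 h2
      rw [abs_of_nonneg (mul_nonneg (sq_nonneg _) (sq_nonneg _))]
      have e1 : (inner ℝ (θ n ω - θstar) (X (n + 1) ω) : ℝ) ^ 2 ≤ ‖θstar‖ ^ 2 * R₀ := by
        have e0 := abs_real_inner_le_norm (θ n ω - θstar) (X (n + 1) ω)
        calc (inner ℝ (θ n ω - θstar) (X (n + 1) ω) : ℝ) ^ 2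
            = |(inner ℝ (θ n ω - θstar) (X (n + 1) ω) : ℝ)| ^ 2 := (sq_abs _).symm
          _ ≤ (‖θ n ω - θstar‖ * ‖X (n + 1) ω‖) ^ 2 := pow_le_pow_left₀ (abs_nonneg _) e0 2
          _ = ‖θ n ω - θstar‖ ^ 2 * ‖X (n + 1) ω‖ ^ 2 := by ring
          _ ≤ ‖θstar‖ ^ 2 * R₀ :=
              mul_le_mul (pow_le_pow_left₀ (norm_nonneg _) h1 2) h2 (sq_nonneg _) (sq_nonneg _)
      have e2 : (inner ℝ (X (n + 1) ω) (b i) : ℝ) ^ 2 ≤ R₀ := by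
        have e0 := habs (X (n + 1) ω) i
        calc (inner ℝ (X (n + 1) ω) (b i) : ℝ) ^ 2
            = |(inner ℝ (X (n + 1) ω) (b i) : ℝ)| ^ 2 := (sq_abs _).symm
          _ ≤ ‖X (n + 1) ω‖ ^ 2 := pow_le_pow_left₀ (abs_nonneg _) e0 2
          _ ≤ R₀ := h2
      exact mul_le_mul e1 e2 (sq_nonneg _) (by positivity)
    have hreal : (∫ ω, (inner ℝ (θ (n + 1) ω - θstar) (b i) : ℝ) ^ 2 ∂P)
        = (∫ ω, (inner ℝ (θ n ω - θstar) (b i) : ℝ) ^ 2 ∂P)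
          - 2 * γ * (μ i * ∫ ω, (inner ℝ (θ n ω - θstar) (b i) : ℝ) ^ 2 ∂P)
          + γ ^ 2 * ∫ ω, (inner ℝ (θ n ω - θstar) (X (n + 1) ω) : ℝ) ^ 2
            * (inner ℝ (X (n + 1) ω) (b i) : ℝ) ^ 2 ∂P := by
      have e : ∀ ω, (inner ℝ (θ (n + 1) ω - θstar) (b i) : ℝ) ^ 2
          = (inner ℝ (θ n ω - θstar) (b i) : ℝ) ^ 2
            - (2 * γ) * ((inner ℝ (θ n ω - θstar) (b i) : ℝ)
              * (inner ℝ (θ n ω - θstar) (X (n + 1) ω) : ℝ) * (inner ℝ (X (n + 1) ω) (b i) : ℝ))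
            + γ ^ 2 * ((inner ℝ (θ n ω - θstar) (X (n + 1) ω) : ℝ) ^ 2
              * (inner ℝ (X (n + 1) ω) (b i) : ℝ) ^ 2) := by
        intro ω; rw [hpt ω]; ring
      have i4 : Integrable (fun ω => (2 * γ) * ((inner ℝ (θ n ω - θstar) (b i) : ℝ)
          * (inner ℝ (θ n ω - θstar) (X (n + 1) ω) : ℝ)
          * (inner ℝ (X (n + 1) ω) (b i) : ℝ))) P := intABC.const_mul _
      have i5 : Integrable (fun ω => γ ^ 2 * ((inner ℝ (θ n ω - θstar) (X (n + 1) ω) : ℝ) ^ 2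
          * (inner ℝ (X (n + 1) ω) (b i) : ℝ) ^ 2)) P := intB2C2.const_mul _
      have i1 : Integrable (fun ω => (inner ℝ (θ n ω - θstar) (b i) : ℝ) ^ 2
          - (2 * γ) * ((inner ℝ (θ n ω - θstar) (b i) : ℝ)
            * (inner ℝ (θ n ω - θstar) (X (n + 1) ω) : ℝ)
            * (inner ℝ (X (n + 1) ω) (b i) : ℝ))) P := (hintA2 n i).sub i4
      rw [integral_congr_ae (Filter.Eventually.of_forall e),
        integral_add i1 i5, integral_sub (hintA2 n i) i4, integral_const_mul _,
        integral_const_mul _, crossInt n i]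
    have nn2 : 0 ≤ ∫ ω, (inner ℝ (θ n ω - θstar) (b i) : ℝ) ^ 2 ∂P :=
      integral_nonneg fun ω => sq_nonneg _
    have nnq : 0 ≤ ∫ ω, (inner ℝ (θ n ω - θstar) (X (n + 1) ω) : ℝ) ^ 2
        * (inner ℝ (X (n + 1) ω) (b i) : ℝ) ^ 2 ∂P :=
      integral_nonneg fun ω => mul_nonneg (sq_nonneg _) (sq_nonneg _)
    rw [hF_ofReal (n + 1) i, hF_ofReal n i,
      ofReal_integral_eq_lintegral_ofReal intB2C2
        (Filter.Eventually.of_forall fun ω => mul_nonneg (sq_nonneg _) (sq_nonneg _)) |>.symm]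
    rw [← ENNReal.ofReal_mul (hμ i), ← ENNReal.ofReal_mul (by linarith : (0:ℝ) ≤ 2 * γ),
      ← ENNReal.ofReal_mul (sq_nonneg γ),
      ← ENNReal.ofReal_add (integral_nonneg fun ω => sq_nonneg _)
        (mul_nonneg (by linarith) (mul_nonneg (hμ i) nn2)),
      ← ENNReal.ofReal_add nn2 (mul_nonneg (sq_nonneg γ) nnq)]
    refine congrArg ENNReal.ofReal ?_
    linarith [hreal]
  -- coordinates with μ i = 0 vanish (when α > 0)
  have hbz : ∀ i, μ i = 0 → 0 < α → (inner ℝ θstar (b i) : ℝ) = 0 := by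
    intro i h0μ hαpos
    by_contra hne
    apply hsrc
    have hterm : (ENNReal.ofReal (μ i)) ^ (-α)
        * ENNReal.ofReal ((inner ℝ θstar (b i) : ℝ) ^ 2) = ⊤ := by
      rw [h0μ, ENNReal.ofReal_zero, ENNReal.zero_rpow_of_neg (by linarith)]
      exact ENNReal.top_mul (ENNReal.ofReal_pos.2 (by positivity)).ne'
    exact eq_top_iff.2 (hterm ▸ ENNReal.le_tsum i)
  have hXz : ∀ i, μ i = 0 → ∀ m, ∀ᵐ ω ∂P, (inner ℝ (X m ω) (b i) : ℝ) = 0 := by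
    intro i h0μ m
    have hintC2 : Integrable (fun ω => (inner ℝ (X m ω) (b i) : ℝ) ^ 2) P := by
      refine intOfBound R₀ _ ((hmC m i).pow_const 2) ?_
      filter_upwards [hbound m] with ω h2
      rw [abs_of_nonneg (sq_nonneg _)]
      calc (inner ℝ (X m ω) (b i) : ℝ) ^ 2 = |(inner ℝ (X m ω) (b i) : ℝ)| ^ 2 := (sq_abs _).symm
        _ ≤ ‖X m ω‖ ^ 2 := pow_le_pow_left₀ (abs_nonneg _) (habs (X m ω) i) 2
        _ ≤ R₀ := h2
    have hI : (∫ ω, (inner ℝ (X m ω) (b i) : ℝ) ^ 2 ∂P) = 0 := by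
      have h1 : (∫ ω, (inner ℝ (X m ω) (b i) : ℝ) ^ 2 ∂P)
          = ∫ ω, (inner ℝ (X m ω) (b i) : ℝ) * (inner ℝ (X m ω) (b i) : ℝ) ∂P := by
        refine integral_congr_ae (Filter.Eventually.of_forall fun ω => ?_); ring
      rw [h1, hcov' m i i, if_pos rfl, h0μ]
    have hz := (integral_eq_zero_iff_of_nonneg (fun ω => sq_nonneg _) hintC2).1 hI
    filter_upwards [hz] with ω hω
    have hω' : (inner ℝ (X m ω) (b i) : ℝ) ^ 2 = 0 := by simpa using hω
    exact sq_eq_zero_iff.mp hω'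
  have hzeroA : ∀ i, μ i = 0 → 0 < α → ∀ n, ∀ᵐ ω ∂P,
      (inner ℝ (θ n ω - θstar) (b i) : ℝ) = 0 := by
    intro i h0μ hαpos n
    induction n with
    | zero =>
      refine Filter.Eventually.of_forall fun ω => ?_
      rw [h0, zero_sub, inner_neg_left, hbz i h0μ hαpos, neg_zero]
    | succ n ih =>
      filter_upwards [ih, hXz i h0μ (n + 1)] with ω h1 h2
      rw [hrec n ω, sub_right_comm, inner_sub_left, real_inner_smul_left, h1, h2]
      ring
  have hzeroF : ∀ i, μ i = 0 → 0 < α → ∀ n,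
      (∫⁻ ω, ENNReal.ofReal ((inner ℝ (θ n ω - θstar) (b i) : ℝ) ^ 2) ∂P) = 0 := by
    intro i h0μ hαpos n
    have h1 : (fun ω => ENNReal.ofReal ((inner ℝ (θ n ω - θstar) (b i) : ℝ) ^ 2))
        =ᵐ[P] (fun _ => 0) := by
      filter_upwards [hzeroA i h0μ hαpos n] with ω hω
      rw [hω]; simp
    rw [lintegral_congr_ae h1, lintegral_const, zero_mul]
  -- Φ_n(-1) is bounded
  have hΦm1 : ∀ n, (∑' j, ENNReal.ofReal (μ j)
        * ∫⁻ ω, ENNReal.ofReal ((inner ℝ (θ n ω - θstar) (b j) : ℝ) ^ 2) ∂P)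
      ≤ ENNReal.ofReal R₀ * ENNReal.ofReal (‖θstar‖ ^ 2) := by
    intro n
    calc (∑' j, ENNReal.ofReal (μ j)
          * ∫⁻ ω, ENNReal.ofReal ((inner ℝ (θ n ω - θstar) (b j) : ℝ) ^ 2) ∂P)
        ≤ ∑' j, ENNReal.ofReal R₀
          * ∫⁻ ω, ENNReal.ofReal ((inner ℝ (θ n ω - θstar) (b j) : ℝ) ^ 2) ∂P :=
          ENNReal.tsum_le_tsum fun j =>
            mul_le_mul' (ENNReal.ofReal_le_ofReal (hμR₀ j)) le_rfl
      _ = ENNReal.ofReal R₀ * ∑' j,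
          ∫⁻ ω, ENNReal.ofReal ((inner ℝ (θ n ω - θstar) (b j) : ℝ) ^ 2) ∂P :=
          ENNReal.tsum_mul_left
      _ ≤ ENNReal.ofReal R₀ * ENNReal.ofReal (‖θstar‖ ^ 2) := by
          refine mul_le_mul' le_rfl ?_
          rw [← lintegral_tsum (fun j => (hmOfA2 n j).aemeasurable)]
          have h2 : ∀ᵐ ω ∂P, (∑' j, ENNReal.ofReal ((inner ℝ (θ n ω - θstar) (b j) : ℝ) ^ 2))
              ≤ ENNReal.ofReal (‖θstar‖ ^ 2) := by
            filter_upwards [hnormθ n] with ω h1'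
            rw [tsum_ofReal_inner_sq b (θ n ω - θstar)]
            exact ENNReal.ofReal_le_ofReal
              (by nlinarith [norm_nonneg (θ n ω - θstar), norm_nonneg θstar])
          calc (∫⁻ ω, ∑' j, ENNReal.ofReal ((inner ℝ (θ n ω - θstar) (b j) : ℝ) ^ 2) ∂P)
              ≤ ∫⁻ _, ENNReal.ofReal (‖θstar‖ ^ 2) ∂P := lintegral_mono_ae h2
            _ = ENNReal.ofReal (‖θstar‖ ^ 2) := by simp [lintegral_const, measure_univ]
  -- the γ² term is controlled by interpolation
  have hsq_bound : ∀ (n : ℕ) (β : ℝ), 0 ≤ β → β ≤ α →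
      (∑' i, (ENNReal.ofReal (μ i)) ^ (-β) * ∫⁻ ω, ENNReal.ofReal
          ((inner ℝ (θ n ω - θstar) (X (n + 1) ω) : ℝ) ^ 2
            * (inner ℝ (X (n + 1) ω) (b i) : ℝ) ^ 2) ∂P)
      ≤ ENNReal.ofReal (R₀ ^ (1 - β / α) * Rα ^ (β / α))
        * ∑' j, ENNReal.ofReal (μ j)
          * ∫⁻ ω, ENNReal.ofReal ((inner ℝ (θ n ω - θstar) (b j) : ℝ) ^ 2) ∂P := by
    intro n β hβ0 hβα
    have hmq : ∀ i : ℕ, Measurable fun ω => ENNReal.ofReal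
        ((inner ℝ (θ n ω - θstar) (X (n + 1) ω) : ℝ) ^ 2
          * (inner ℝ (X (n + 1) ω) (b i) : ℝ) ^ 2) :=
      fun i => (((hmB n).pow_const 2).mul ((hmC (n + 1) i).pow_const 2)).ennreal_ofReal
    calc (∑' i, (ENNReal.ofReal (μ i)) ^ (-β) * ∫⁻ ω, ENNReal.ofReal
          ((inner ℝ (θ n ω - θstar) (X (n + 1) ω) : ℝ) ^ 2
            * (inner ℝ (X (n + 1) ω) (b i) : ℝ) ^ 2) ∂P)
        = ∫⁻ ω, ∑' i, (ENNReal.ofReal (μ i)) ^ (-β) * ENNReal.ofReal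
            ((inner ℝ (θ n ω - θstar) (X (n + 1) ω) : ℝ) ^ 2
              * (inner ℝ (X (n + 1) ω) (b i) : ℝ) ^ 2) ∂P := by
          rw [lintegral_tsum (fun i => ((hmq i).const_mul _).aemeasurable)]
          exact tsum_congr fun i => (lintegral_const_mul _ (hmq i)).symm
      _ = ∫⁻ ω, ENNReal.ofReal ((inner ℝ (θ n ω - θstar) (X (n + 1) ω) : ℝ) ^ 2)
            * specPow b μ β (X (n + 1) ω) ∂P := by
          refine lintegral_congr fun ω => ?_
          simp only [specPow]
          rw [← ENNReal.tsum_mul_left]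
          refine tsum_congr fun i => ?_
          rw [ENNReal.ofReal_mul (sq_nonneg _)]
          ring
      _ ≤ ∫⁻ ω, ENNReal.ofReal ((inner ℝ (θ n ω - θstar) (X (n + 1) ω) : ℝ) ^ 2)
            * ENNReal.ofReal (R₀ ^ (1 - β / α) * Rα ^ (β / α)) ∂P := by
          refine lintegral_mono_ae ?_
          filter_upwards [hbound (n + 1), hreg (n + 1)] with ω h1 h2
          exact mul_le_mul' le_rfl (specPow_interp b μ hβ0 hβα hR₀ hRα _ h1 h2)
      _ = ENNReal.ofReal (R₀ ^ (1 - β / α) * Rα ^ (β / α))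
            * ∫⁻ ω, ENNReal.ofReal ((inner ℝ (θ n ω - θstar) (X (n + 1) ω) : ℝ) ^ 2) ∂P := by
          rw [lintegral_mul_const _ ((hmB n).pow_const 2).ennreal_ofReal, mul_comm]
      _ ≤ _ := mul_le_mul' le_rfl (hBsq n)
  -- finiteness at level α, by induction
  have hfinα : ∀ n, (∑' j, (ENNReal.ofReal (μ j)) ^ (-α)
      * ∫⁻ ω, ENNReal.ofReal ((inner ℝ (θ n ω - θstar) (b j) : ℝ) ^ 2) ∂P) ≠ ⊤ := by
    intro n
    induction n with
    | zero =>
      have hc : ∀ j, (∫⁻ ω, ENNReal.ofReal ((inner ℝ (θ 0 ω - θstar) (b j) : ℝ) ^ 2) ∂P)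
          = ENNReal.ofReal ((inner ℝ θstar (b j) : ℝ) ^ 2) := by
        intro j
        have e : ∀ ω, ENNReal.ofReal ((inner ℝ (θ 0 ω - θstar) (b j) : ℝ) ^ 2)
            = ENNReal.ofReal ((inner ℝ θstar (b j) : ℝ) ^ 2) := by
          intro ω
          rw [h0, zero_sub, inner_neg_left]
          ring_nf
        rw [lintegral_congr e, lintegral_const]
        simp [measure_univ]
      have e2 : (∑' j, (ENNReal.ofReal (μ j)) ^ (-α)
          * ∫⁻ ω, ENNReal.ofReal ((inner ℝ (θ 0 ω - θstar) (b j) : ℝ) ^ 2) ∂P)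
          = specPow b μ α θstar := by
        unfold specPow
        exact tsum_congr fun j => by rw [hc j]
      rw [e2]
      exact hsrc
    | succ n ih =>
      have hle : (∑' j, (ENNReal.ofReal (μ j)) ^ (-α)
          * ∫⁻ ω, ENNReal.ofReal ((inner ℝ (θ (n + 1) ω - θstar) (b j) : ℝ) ^ 2) ∂P)
          ≤ (∑' j, (ENNReal.ofReal (μ j)) ^ (-α)
            * ∫⁻ ω, ENNReal.ofReal ((inner ℝ (θ n ω - θstar) (b j) : ℝ) ^ 2) ∂P)
            + ENNReal.ofReal (γ ^ 2) * (ENNReal.ofReal (R₀ ^ (1 - α / α) * Rα ^ (α / α))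
              * ∑' j, ENNReal.ofReal (μ j)
                * ∫⁻ ω, ENNReal.ofReal ((inner ℝ (θ n ω - θstar) (b j) : ℝ) ^ 2) ∂P) := by
        calc (∑' j, (ENNReal.ofReal (μ j)) ^ (-α)
            * ∫⁻ ω, ENNReal.ofReal ((inner ℝ (θ (n + 1) ω - θstar) (b j) : ℝ) ^ 2) ∂P)
            ≤ ∑' j, (ENNReal.ofReal (μ j)) ^ (-α)
              * ((∫⁻ ω, ENNReal.ofReal ((inner ℝ (θ n ω - θstar) (b j) : ℝ) ^ 2) ∂P)
                + ENNReal.ofReal (γ ^ 2) * ∫⁻ ω, ENNReal.ofReal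
                  ((inner ℝ (θ n ω - θstar) (X (n + 1) ω) : ℝ) ^ 2
                    * (inner ℝ (X (n + 1) ω) (b j) : ℝ) ^ 2) ∂P) := by
              refine ENNReal.tsum_le_tsum fun j => mul_le_mul' le_rfl ?_
              rw [← maineq n j]
              exact le_self_add
          _ = (∑' j, (ENNReal.ofReal (μ j)) ^ (-α)
              * ∫⁻ ω, ENNReal.ofReal ((inner ℝ (θ n ω - θstar) (b j) : ℝ) ^ 2) ∂P)
              + ENNReal.ofReal (γ ^ 2) * ∑' j, (ENNReal.ofReal (μ j)) ^ (-α)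
                * ∫⁻ ω, ENNReal.ofReal ((inner ℝ (θ n ω - θstar) (X (n + 1) ω) : ℝ) ^ 2
                  * (inner ℝ (X (n + 1) ω) (b j) : ℝ) ^ 2) ∂P := by
              rw [← ENNReal.tsum_mul_left, ← ENNReal.tsum_add]
              exact tsum_congr fun j => by ring
          _ ≤ _ := add_le_add le_rfl (mul_le_mul' le_rfl (hsq_bound n α hα le_rfl))
      refine ne_top_of_le_ne_top ?_ hle
      refine ENNReal.add_ne_top.2 ⟨ih, ?_⟩
      refine ENNReal.mul_ne_top ENNReal.ofReal_ne_top ?_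
      refine ENNReal.mul_ne_top ENNReal.ofReal_ne_top ?_
      exact ne_top_of_le_ne_top
        (ENNReal.mul_ne_top ENNReal.ofReal_ne_top ENNReal.ofReal_ne_top) (hΦm1 n)
  -- comparison of weights for β ≤ α
  have hcle : ∀ (i : ℕ) (β : ℝ), β ≤ α → (ENNReal.ofReal (μ i)) ^ (-β)
      ≤ (1 + ENNReal.ofReal R₀) ^ (α - β) * (ENNReal.ofReal (μ i)) ^ (-α) := by
    intro i β hβ
    rcases eq_or_ne (ENNReal.ofReal (μ i)) 0 with h0c | h0c
    · rw [h0c]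
      rcases lt_trichotomy β 0 with hb | hb | hb
      · rw [ENNReal.zero_rpow_of_pos (by linarith : 0 < -β)]
        exact zero_le
      · subst hb
        rw [neg_zero, ENNReal.rpow_zero]
        have h1 : (1 : ℝ≥0∞) ≤ (1 + ENNReal.ofReal R₀) ^ (α - 0) := by
          calc (1 : ℝ≥0∞) = 1 ^ (α - 0) := (ENNReal.one_rpow _).symm
            _ ≤ (1 + ENNReal.ofReal R₀) ^ (α - 0) :=
                ENNReal.rpow_le_rpow le_self_add (by linarith)
        have h2 : (1 : ℝ≥0∞) ≤ (0 : ℝ≥0∞) ^ (-α) := by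
          rcases eq_or_lt_of_le hα with h | h
          · rw [← h]; simp
          · rw [ENNReal.zero_rpow_of_neg (by linarith)]; exact le_top
        calc (1 : ℝ≥0∞) = 1 * 1 := (mul_one 1).symm
          _ ≤ _ := mul_le_mul' h1 h2
      · have hαpos : (0 : ℝ) < α := lt_of_lt_of_le hb hβ
        rw [ENNReal.zero_rpow_of_neg (by linarith : -β < 0),
          ENNReal.zero_rpow_of_neg (by linarith : -α < 0), ENNReal.mul_top]
        intro hK
        have h1 : (1 : ℝ≥0∞) ≤ (1 + ENNReal.ofReal R₀) ^ (α - β) := by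
          calc (1 : ℝ≥0∞) = 1 ^ (α - β) := (ENNReal.one_rpow _).symm
            _ ≤ (1 + ENNReal.ofReal R₀) ^ (α - β) :=
                ENNReal.rpow_le_rpow le_self_add (by linarith)
        rw [hK] at h1
        simp at h1
    · have hct : ENNReal.ofReal (μ i) ≠ ⊤ := ENNReal.ofReal_ne_top
      rw [show (-β) = (α - β) + (-α) by ring, ENNReal.rpow_add _ _ h0c hct]
      refine mul_le_mul' (ENNReal.rpow_le_rpow ?_ (by linarith)) le_rfl
      calc ENNReal.ofReal (μ i) ≤ ENNReal.ofReal R₀ := ENNReal.ofReal_le_ofReal (hμR₀ i)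
        _ ≤ 1 + ENNReal.ofReal R₀ := le_add_self
  have hfin : ∀ (n : ℕ) (β : ℝ), β ≤ α →
      (∫⁻ ω, specPow b μ β (θ n ω - θstar) ∂P) ≠ ⊤ := by
    intro n β hβ
    rw [hΦ n β]
    have hK : (1 + ENNReal.ofReal R₀) ^ (α - β) ≠ ⊤ :=
      ENNReal.rpow_ne_top_of_nonneg (by linarith)
        (by simp [ENNReal.add_eq_top, ENNReal.ofReal_ne_top])
    have hle : (∑' j, (ENNReal.ofReal (μ j)) ^ (-β)
        * ∫⁻ ω, ENNReal.ofReal ((inner ℝ (θ n ω - θstar) (b j) : ℝ) ^ 2) ∂P)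
        ≤ (1 + ENNReal.ofReal R₀) ^ (α - β) * ∑' j, (ENNReal.ofReal (μ j)) ^ (-α)
          * ∫⁻ ω, ENNReal.ofReal ((inner ℝ (θ n ω - θstar) (b j) : ℝ) ^ 2) ∂P := by
      rw [← ENNReal.tsum_mul_left]
      refine ENNReal.tsum_le_tsum fun j => ?_
      rw [← mul_assoc]
      exact mul_le_mul' (hcle j β hβ) le_rfl
    exact ne_top_of_le_ne_top (ENNReal.mul_ne_top hK (hfinα n)) hle
  refine ⟨hfin, ?_⟩
  intro n β hβ0 hβα
  rw [hΦ (n + 1) β, hΦ n (β - 1), hΦ n β, hΦ n (-1)]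
  have hsplit : ∀ j, (ENNReal.ofReal (μ j)) ^ (-(β - 1))
      * (∫⁻ ω, ENNReal.ofReal ((inner ℝ (θ n ω - θstar) (b j) : ℝ) ^ 2) ∂P)
      = (ENNReal.ofReal (μ j)) ^ (-β) * (ENNReal.ofReal (μ j)
        * ∫⁻ ω, ENNReal.ofReal ((inner ℝ (θ n ω - θstar) (b j) : ℝ) ^ 2) ∂P) := by
    intro j
    rcases eq_or_ne (μ j) 0 with h0μ | h0μ
    · rcases eq_or_lt_of_le hα with hc | hc
      · obtain rfl : β = 0 := le_antisymm (hβα.trans hc.symm.le) hβ0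
        rw [h0μ, ENNReal.ofReal_zero]
        norm_num
      · rw [hzeroF j h0μ hc n]
        simp
    · have h0c : ENNReal.ofReal (μ j) ≠ 0 := by
        rw [Ne, ENNReal.ofReal_eq_zero]
        intro hle'
        exact h0μ (le_antisymm hle' (hμ j))
      rw [show (-(β - 1)) = (-β) + 1 by ring,
        ENNReal.rpow_add _ _ h0c ENNReal.ofReal_ne_top, ENNReal.rpow_one, mul_assoc]
  have hm1 : ∀ j, (ENNReal.ofReal (μ j)) ^ (-(-1 : ℝ))
      * (∫⁻ ω, ENNReal.ofReal ((inner ℝ (θ n ω - θstar) (b j) : ℝ) ^ 2) ∂P)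
      = ENNReal.ofReal (μ j)
        * ∫⁻ ω, ENNReal.ofReal ((inner ℝ (θ n ω - θstar) (b j) : ℝ) ^ 2) ∂P := by
    intro j
    rw [neg_neg, ENNReal.rpow_one]
  rw [tsum_congr hsplit, tsum_congr hm1]
  calc (∑' j, (ENNReal.ofReal (μ j)) ^ (-β)
        * ∫⁻ ω, ENNReal.ofReal ((inner ℝ (θ (n + 1) ω - θstar) (b j) : ℝ) ^ 2) ∂P)
        + ENNReal.ofReal (2 * γ) * ∑' j, (ENNReal.ofReal (μ j)) ^ (-β)
          * (ENNReal.ofReal (μ j)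
            * ∫⁻ ω, ENNReal.ofReal ((inner ℝ (θ n ω - θstar) (b j) : ℝ) ^ 2) ∂P)
      = ∑' j, (ENNReal.ofReal (μ j)) ^ (-β)
          * ((∫⁻ ω, ENNReal.ofReal ((inner ℝ (θ (n + 1) ω - θstar) (b j) : ℝ) ^ 2) ∂P)
            + ENNReal.ofReal (2 * γ) * (ENNReal.ofReal (μ j)
              * ∫⁻ ω, ENNReal.ofReal ((inner ℝ (θ n ω - θstar) (b j) : ℝ) ^ 2) ∂P)) := by
        rw [← ENNReal.tsum_mul_left, ← ENNReal.tsum_add]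
        exact tsum_congr fun j => by ring
    _ = ∑' j, (ENNReal.ofReal (μ j)) ^ (-β)
          * ((∫⁻ ω, ENNReal.ofReal ((inner ℝ (θ n ω - θstar) (b j) : ℝ) ^ 2) ∂P)
            + ENNReal.ofReal (γ ^ 2) * ∫⁻ ω, ENNReal.ofReal
              ((inner ℝ (θ n ω - θstar) (X (n + 1) ω) : ℝ) ^ 2
                * (inner ℝ (X (n + 1) ω) (b j) : ℝ) ^ 2) ∂P) := by
        exact tsum_congr fun j => by rw [maineq n j]
    _ = (∑' j, (ENNReal.ofReal (μ j)) ^ (-β)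
          * ∫⁻ ω, ENNReal.ofReal ((inner ℝ (θ n ω - θstar) (b j) : ℝ) ^ 2) ∂P)
        + ENNReal.ofReal (γ ^ 2) * ∑' j, (ENNReal.ofReal (μ j)) ^ (-β)
          * ∫⁻ ω, ENNReal.ofReal ((inner ℝ (θ n ω - θstar) (X (n + 1) ω) : ℝ) ^ 2
            * (inner ℝ (X (n + 1) ω) (b j) : ℝ) ^ 2) ∂P := by
        rw [← ENNReal.tsum_mul_left, ← ENNReal.tsum_add]
        exact tsum_congr fun j => by ring
    _ ≤ (∑' j, (ENNReal.ofReal (μ j)) ^ (-β)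
          * ∫⁻ ω, ENNReal.ofReal ((inner ℝ (θ n ω - θstar) (b j) : ℝ) ^ 2) ∂P)
        + ENNReal.ofReal (γ ^ 2) * (ENNReal.ofReal (R₀ ^ (1 - β / α) * Rα ^ (β / α))
          * ∑' j, ENNReal.ofReal (μ j)
            * ∫⁻ ω, ENNReal.ofReal ((inner ℝ (θ n ω - θstar) (b j) : ℝ) ^ 2) ∂P) :=
        add_le_add le_rfl (mul_le_mul' le_rfl (hsq_bound n β hβ0 hβα))
    _ = (∑' j, (ENNReal.ofReal (μ j)) ^ (-β)
          * ∫⁻ ω, ENNReal.ofReal ((inner ℝ (θ n ω - θstar) (b j) : ℝ) ^ 2) ∂P)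
        + ENNReal.ofReal (γ ^ 2 * R₀ ^ (1 - β / α) * Rα ^ (β / α))
          * ∑' j, ENNReal.ofReal (μ j)
            * ∫⁻ ω, ENNReal.ofReal ((inner ℝ (θ n ω - θstar) (b j) : ℝ) ^ 2) ∂P := by
        rw [← mul_assoc (ENNReal.ofReal (γ ^ 2)), ← ENNReal.ofReal_mul (sq_nonneg γ),
          show γ ^ 2 * (R₀ ^ (1 - β / α) * Rα ^ (β / α))
            = γ ^ 2 * R₀ ^ (1 - β / α) * Rα ^ (β / α) from (mul_assoc _ _ _).symm]
end

section
/- Under the noiseless linear model with 0 < γ ≤ 1/R₀ and the assumption that θ* ∉ Σ^{ᾱ/2}(H) (i.e. ‖Σ^{-ᾱ/2}θ*‖ = ∞) for some ᾱ > 0, the reconstruction error E[‖θ_n − θ*‖²] of the SGD iterates is not asymptotically dominated by 1/n^{ᾱ+ε} for any ε > 0, i.e. limsup n^{ᾱ+ε} E[‖θ_n − θ*‖²] = ∞. -/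
open MeasureTheory ProbabilityTheory ENNReal Filter

section Aux


private lemma aux_sum_real {al d : ℝ} (hal : 0 < al) (hd0 : 0 < d) (hd : d ≤ 1/2) :
    (1/4) * (1/(8*d))^al ≤ ∑ n ∈ Finset.Icc 1 ⌊1/(2*d)⌋₊, (n:ℝ)^(al-1) * (1-d)^n := by
  set x : ℝ := 1/(2*d) with hxdef
  have hx : 1 ≤ x := by rw [hxdef]; rw [le_div_iff₀ (by linarith)]; linarith
  set M := ⌊x⌋₊ with hMdef
  have hM1 : 1 ≤ M := Nat.le_floor (by exact_mod_cast hx)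
  have hMx : (M:ℝ) ≤ x := Nat.floor_le (by linarith)
  have hxM : x/2 ≤ (M:ℝ) := by
    rcases le_or_gt 2 x with h2 | h2
    · have := Nat.sub_one_lt_floor x
      linarith
    · have : (1:ℝ) ≤ (M:ℝ) := by exact_mod_cast hM1
      linarith
  have hMpos : (0:ℝ) < M := by exact_mod_cast hM1
  have half : ∀ n ∈ Finset.Icc 1 M, (1/2:ℝ) ≤ (1-d)^n := by
    intro n hn
    rw [Finset.mem_Icc] at hn
    have hnd : (n:ℝ) * d ≤ 1/2 := by
      have : (n:ℝ) ≤ x := le_trans (by exact_mod_cast hn.2) hMx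
      calc (n:ℝ) * d ≤ x * d := by nlinarith
        _ = 1/2 := by rw [hxdef, div_mul_eq_mul_div, one_mul, div_eq_div_iff (by positivity) (by norm_num)]; ring
    have := one_add_mul_le_pow (a := -d) (by linarith) n
    have h2 : (1:ℝ) + n * (-d) ≤ (1-d)^n := by simpa [sub_eq_add_neg] using this
    linarith
  have hnonneg : ∀ n ∈ Finset.Icc 1 M, (0:ℝ) ≤ (n:ℝ)^(al-1) * (1-d)^n := by
    intro n hn
    have : (0:ℝ) ≤ 1 - d := by linarith
    positivity
  have hMd : 1/(4*d) ≤ (M:ℝ) := by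
    have : x/2 = 1/(4*d) := by rw [hxdef]; ring
    linarith
  have key : (1/2) * ((M:ℝ)/2)^al ≤ ∑ n ∈ Finset.Icc 1 M, (n:ℝ)^(al-1) * (1-d)^n := by
    rcases le_or_gt al 1 with h1 | h1
    · -- decreasing case: each term ≥ M^(al-1) * 1/2, count M
      have hterm : ∀ n ∈ Finset.Icc 1 M, (M:ℝ)^(al-1) * (1/2) ≤ (n:ℝ)^(al-1) * (1-d)^n := by
        intro n hn
        have hn' := Finset.mem_Icc.mp hn
        have hnpos : (0:ℝ) < n := by exact_mod_cast hn'.1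
        have hle : (n:ℝ) ≤ M := by exact_mod_cast hn'.2
        have h : (M:ℝ)^(al-1) ≤ (n:ℝ)^(al-1) := Real.rpow_le_rpow_of_nonpos hnpos hle (by linarith)
        exact mul_le_mul h (half n hn) (by norm_num) (Real.rpow_nonneg hnpos.le _)
      calc (1/2) * ((M:ℝ)/2)^al ≤ (1/2) * (M:ℝ)^al := by
            have := Real.rpow_le_rpow (by positivity) (by linarith : (M:ℝ)/2 ≤ M) hal.le
            nlinarith
        _ ≤ (M:ℝ) * ((M:ℝ)^(al-1) * (1/2)) := by
            rw [show al = (al-1) + 1 by ring, Real.rpow_add hMpos, Real.rpow_one]; ring_nf; nlinarith [Real.rpow_nonneg hMpos.le (al-1)]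
        _ = (M * ((M:ℝ)^(al-1) * (1/2)) : ℝ) := by ring
        _ ≤ ∑ n ∈ Finset.Icc 1 M, (n:ℝ)^(al-1) * (1-d)^n := by
            have hcard : (Finset.Icc 1 M).card = M := by simp
            have := Finset.card_nsmul_le_sum (Finset.Icc 1 M) _ _ hterm
            rw [hcard] at this
            simpa [nsmul_eq_mul] using this
    · -- increasing case: restrict to Icc (M/2+1) M
      have hsub : Finset.Icc (M/2+1) M ⊆ Finset.Icc 1 M := by
        apply Finset.Icc_subset_Icc_left; omega
      have hdivcast : ((M/2 : ℕ) : ℝ) ≤ (M:ℝ)/2 := by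
        have := Nat.cast_div_le (m := M) (n := 2) (α := ℝ)
        simpa using this
      have hterm : ∀ n ∈ Finset.Icc (M/2+1) M, ((M:ℝ)/2)^(al-1) * (1/2) ≤ (n:ℝ)^(al-1) * (1-d)^n := by
        intro n hn
        have hn' := Finset.mem_Icc.mp hn
        have hnge : (M:ℝ)/2 ≤ (n:ℝ) := by
          have : ((M/2:ℕ):ℝ) + 1 ≤ (n:ℝ) := by exact_mod_cast hn'.1
          have h2 : 2*(M/2 : ℕ) + 1 ≥ M := by omega
          have h2' : (M:ℝ) ≤ 2*((M/2:ℕ):ℝ) + 1 := by exact_mod_cast h2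
          linarith
        have h := Real.rpow_le_rpow (by positivity) hnge (by linarith : (0:ℝ) ≤ al - 1)
        have hnpos : (0:ℝ) ≤ n := Nat.cast_nonneg n
        exact mul_le_mul h (half n (hsub hn)) (by norm_num) (Real.rpow_nonneg hnpos _)
      have hcard : (M:ℝ)/2 ≤ ((Finset.Icc (M/2+1) M).card : ℝ) := by
        rw [Nat.card_Icc]
        have : M + 1 - (M/2+1) = M - M/2 := by omega
        rw [this]
        have h1 : M/2 ≤ M := Nat.div_le_self M 2
        rw [Nat.cast_sub h1]; linarith
      calc (1/2) * ((M:ℝ)/2)^al 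
          = ((M:ℝ)/2) * (((M:ℝ)/2)^(al-1) * (1/2)) := by
            rw [show al = (al-1) + 1 by ring, Real.rpow_add (by positivity), Real.rpow_one]; ring
        _ ≤ ((Finset.Icc (M/2+1) M).card : ℝ) * (((M:ℝ)/2)^(al-1) * (1/2)) := by
            apply mul_le_mul_of_nonneg_right hcard; positivity
        _ ≤ ∑ n ∈ Finset.Icc (M/2+1) M, (n:ℝ)^(al-1) * (1-d)^n := by
            have := Finset.card_nsmul_le_sum (Finset.Icc (M/2+1) M) _ _ hterm
            simpa [nsmul_eq_mul] using this
        _ ≤ ∑ n ∈ Finset.Icc 1 M, (n:ℝ)^(al-1) * (1-d)^n := by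
            exact Finset.sum_le_sum_of_subset_of_nonneg hsub (fun n hn _ => hnonneg n hn)
  have hfinal : (1/4) * (1/(8*d))^al ≤ (1/2) * ((M:ℝ)/2)^al := by
    have h8 : (0:ℝ) < 1/(8*d) := by positivity
    have heq : (1/(8*d):ℝ) = (1/(4*d))/2 := by ring
    have : (1/(8*d):ℝ) ≤ (M:ℝ)/2 := by linarith
    have := Real.rpow_le_rpow h8.le this hal.le
    nlinarith [Real.rpow_nonneg h8.le al]
  linarith

private lemma aux_sum_ennreal {al d : ℝ} (hal : 0 < al) (hd0 : 0 < d) (hd : d ≤ 1/2) (c : ℝ) :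
    ENNReal.ofReal ((1/(8*d))^al * c^2)
      ≤ 4 * ∑' n : ℕ, ENNReal.ofReal ((n:ℝ)^(al-1)) * ENNReal.ofReal ((1-d)^n * c^2) := by
  set s := Finset.Icc 1 ⌊1/(2*d)⌋₊ with hs
  have hreal := aux_sum_real hal hd0 hd
  have hc2 : (0:ℝ) ≤ c^2 := sq_nonneg c
  have hd1 : (0:ℝ) ≤ 1 - d := by linarith
  calc ENNReal.ofReal ((1/(8*d))^al * c^2)
      = 4 * ENNReal.ofReal ((1/4) * ((1/(8*d))^al * c^2)) := by
        rw [show ((4:ℝ≥0∞)) = ENNReal.ofReal (4:ℝ) by norm_num,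
          ← ENNReal.ofReal_mul (by norm_num)]
        congr 1; ring
    _ ≤ 4 * ENNReal.ofReal ((∑ n ∈ s, (n:ℝ)^(al-1) * (1-d)^n) * c^2) := by
        apply mul_le_mul_right
        apply ENNReal.ofReal_le_ofReal
        calc (1/4) * ((1/(8*d))^al * c^2) = ((1/4) * (1/(8*d))^al) * c^2 := by ring
          _ ≤ _ := mul_le_mul_of_nonneg_right hreal hc2
    _ = 4 * ∑ n ∈ s, ENNReal.ofReal ((n:ℝ)^(al-1) * ((1-d)^n * c^2)) := by
        rw [Finset.sum_mul]
        rw [ENNReal.ofReal_sum_of_nonneg (fun n _ => by positivity)]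
        congr 1; apply Finset.sum_congr rfl; intro n _; congr 1; ring
    _ = 4 * ∑ n ∈ s, ENNReal.ofReal ((n:ℝ)^(al-1)) * ENNReal.ofReal ((1-d)^n * c^2) := by
        congr 1; apply Finset.sum_congr rfl; intro n _
        rw [ENNReal.ofReal_mul (Real.rpow_nonneg (Nat.cast_nonneg n) _)]
    _ ≤ 4 * ∑' n : ℕ, ENNReal.ofReal ((n:ℝ)^(al-1)) * ENNReal.ofReal ((1-d)^n * c^2) :=
        mul_le_mul_right (ENNReal.sum_le_tsum s) _

private lemma endgame {μ c : ℕ → ℝ} {L : ℕ → ℕ → ℝ≥0∞} {Ltot : ℕ → ℝ≥0∞} {al γ R₀ Cθ ε : ℝ}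
    (hμ : ∀ i, 0 ≤ μ i) (hμR : ∀ i, μ i ≤ R₀) (hal : 0 < al) (hγ0 : 0 < γ)
    (hγR : γ * R₀ ≤ 1) (hε : 0 < ε)
    (key : ∀ n i, ENNReal.ofReal (((1-γ*μ i)^2)^n * (c i)^2) ≤ L n i)
    (hsum : ∀ n, ∑' i, L n i = Ltot n)
    (hLbdd : ∀ n, Ltot n ≤ ENNReal.ofReal Cθ)
    (hpc : ∑' i, ENNReal.ofReal ((c i)^2) ≤ ENNReal.ofReal Cθ)
    (hirr : ∑' i, (ENNReal.ofReal (μ i))^(-al) * ENNReal.ofReal ((c i)^2) = ⊤) :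
    Filter.limsup (fun n : ℕ => ENNReal.ofReal ((n:ℝ)^(al+ε)) * Ltot n) atTop = ⊤ := by
  by_contra hlim
  have hev : ∀ᶠ n in atTop, (fun n : ℕ => ENNReal.ofReal ((n:ℝ)^(al+ε)) * Ltot n) n
      < Filter.limsup (fun n : ℕ => ENNReal.ofReal ((n:ℝ)^(al+ε)) * Ltot n) atTop + 1 :=
    eventually_lt_of_limsup_lt (ENNReal.lt_add_right hlim one_ne_zero)
  set C := Filter.limsup (fun n : ℕ => ENNReal.ofReal ((n:ℝ)^(al+ε)) * Ltot n) atTop + 1 with hC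
  have hCne : C ≠ ⊤ := by
    rw [hC]
    exact ENNReal.add_ne_top.mpr ⟨hlim, one_ne_top⟩
  obtain ⟨N, hN⟩ := eventually_atTop.mp hev
  -- zero eigenvalue components vanish
  have hzero : ∀ i, μ i = 0 → c i = 0 := by
    intro i hμ0
    by_contra hc
    have hpos : 0 < (c i)^2 := by positivity
    have hbig : ∀ n, n ≥ N → ENNReal.ofReal ((n:ℝ)^(al+ε) * (c i)^2) ≤ C := by
      intro n hn
      have h1 : ENNReal.ofReal ((c i)^2) ≤ Ltot n := by
        have h2 := key n i
        rw [hμ0] at h2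
        simp only [mul_zero, sub_zero, one_pow, one_mul] at h2
        exact h2.trans (le_trans (ENNReal.le_tsum i) (le_of_eq (hsum n)))
      rw [ENNReal.ofReal_mul (by positivity)]
      exact le_trans (mul_le_mul_right h1 _) (hN n hn).le
    have htend : Tendsto (fun n : ℕ => ((n:ℝ))^(al+ε)) atTop atTop :=
      (tendsto_rpow_atTop (by linarith)).comp tendsto_natCast_atTop_atTop
    obtain ⟨n, hn1, hn2⟩ :=
      ((htend.eventually_gt_atTop ((C.toReal)/(c i)^2)).and (eventually_ge_atTop N)).exists
    have hle := hbig n hn2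
    have hlt : C < ENNReal.ofReal ((n:ℝ)^(al+ε) * (c i)^2) := by
      rw [ENNReal.lt_ofReal_iff_toReal_lt hCne]
      rw [div_lt_iff₀ hpos] at hn1
      linarith
    exact absurd hle hlt.not_ge
  -- the weighted series is finite
  set S := ∑' n : ℕ, ENNReal.ofReal ((n:ℝ)^(al-1)) * Ltot n with hS0
  have hS : S ≠ ⊤ := by
    set N' := max N 1 with hN'
    have hterm : ∀ n : ℕ, ENNReal.ofReal ((n:ℝ)^(al-1)) * Ltot n
        ≤ (if n < N' then ENNReal.ofReal ((n:ℝ)^(al-1)) * ENNReal.ofReal Cθ else 0)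
          + C * ENNReal.ofReal ((n:ℝ)^(-1-ε)) := by
      intro n
      by_cases h : n < N'
      · simp only [if_pos h]
        exact le_add_right (mul_le_mul_right (hLbdd n) _)
      · simp only [if_neg h, zero_add]
        push_neg at h
        have hn1 : (1:ℕ) ≤ n := le_trans (le_max_right N 1) h
        have hnN : N ≤ n := le_trans (le_max_left N 1) h
        have hnR : (0:ℝ) < n := by exact_mod_cast hn1
        have hsplit : ((n:ℝ))^(al-1) = (n:ℝ)^(-1-ε) * (n:ℝ)^(al+ε) := by
          rw [← Real.rpow_add hnR]; ring_nf
        rw [hsplit, ENNReal.ofReal_mul (by positivity), mul_assoc]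
        calc ENNReal.ofReal ((n:ℝ)^(-1-ε)) * (ENNReal.ofReal ((n:ℝ)^(al+ε)) * Ltot n)
            ≤ ENNReal.ofReal ((n:ℝ)^(-1-ε)) * C := mul_le_mul_right (hN n hnN).le _
          _ = C * ENNReal.ofReal ((n:ℝ)^(-1-ε)) := mul_comm _ _
    have hSle : S ≤ (∑' n : ℕ, (if n < N' then ENNReal.ofReal ((n:ℝ)^(al-1)) * ENNReal.ofReal Cθ else 0))
        + C * ∑' n : ℕ, ENNReal.ofReal ((n:ℝ)^(-1-ε)) :=
      (ENNReal.tsum_le_tsum hterm).trans (by rw [ENNReal.tsum_add, ENNReal.tsum_mul_left])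
    apply ne_top_of_le_ne_top _ hSle
    apply ENNReal.add_ne_top.mpr
    constructor
    · rw [tsum_eq_sum (s := Finset.range N') (fun n hn => if_neg (by simpa using hn))]
      apply (ENNReal.sum_lt_top.mpr ?_).ne
      intro n _
      split
      · exact ENNReal.mul_lt_top ofReal_lt_top ofReal_lt_top
      · exact zero_lt_top
    · apply ENNReal.mul_ne_top hCne
      have hsummable : Summable (fun n : ℕ => (n:ℝ)^(-1-ε)) :=
        Real.summable_nat_rpow.mpr (by linarith)
      rw [← ENNReal.ofReal_tsum_of_nonneg (fun n => Real.rpow_nonneg (Nat.cast_nonneg n) _) hsummable]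
      exact ofReal_ne_top
  -- split the divergent series
  classical
  set F : ℕ → ℝ≥0∞ := fun i => (ENNReal.ofReal (μ i))^(-al) * ENNReal.ofReal ((c i)^2) with hF0
  set p : ℕ → Prop := fun i => γ*μ i*(2-γ*μ i) ≤ 1/2 with hp0
  have hsplit2 : (∑' i, if p i then F i else 0) + (∑' i, if p i then 0 else F i) = ⊤ := by
    rw [← ENNReal.tsum_add, ← hirr]
    apply tsum_congr; intro i
    by_cases h : p i <;> simp [h, hF0]
  have hU : (∑' i, if p i then 0 else F i) ≠ ⊤ := by
    have hb : ∀ i, (if p i then 0 else F i)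
        ≤ (ENNReal.ofReal (1/(4*γ)))^(-al) * ENNReal.ofReal ((c i)^2) := by
      intro i
      by_cases h : p i
      · simp only [if_pos h]; exact zero_le
      · simp only [if_neg h, hF0]
        apply mul_le_mul_left
        have h4 : 1/(4*γ) ≤ μ i := by
          simp only [hp0, not_le] at h
          rw [div_le_iff₀ (by positivity)]
          nlinarith [sq_nonneg (γ*μ i), hμ i]
        rw [ENNReal.rpow_neg, ENNReal.rpow_neg]
        exact ENNReal.inv_le_inv' (ENNReal.rpow_le_rpow (ofReal_le_ofReal h4) hal.le)
    have hUb : (∑' i, if p i then 0 else F i)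
        ≤ (ENNReal.ofReal (1/(4*γ)))^(-al) * ENNReal.ofReal Cθ := by
      refine (ENNReal.tsum_le_tsum hb).trans ?_
      rw [ENNReal.tsum_mul_left]
      exact mul_le_mul_right hpc _
    apply ne_top_of_le_ne_top _ hUb
    apply ENNReal.mul_ne_top _ ofReal_ne_top
    rw [ENNReal.rpow_neg]
    refine ENNReal.inv_ne_top.mpr (ne_of_gt (ENNReal.rpow_pos ?_ ofReal_ne_top))
    rw [ENNReal.ofReal_pos]; positivity
  have hT : (∑' i, if p i then F i else 0) = ⊤ := by
    by_contra h
    exact absurd hsplit2 (ENNReal.add_ne_top.mpr ⟨h, hU⟩)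
  -- bound the divergent part by the finite series
  have hperi : ∀ i, (if p i then F i else 0)
      ≤ ENNReal.ofReal ((16*γ)^al)
        * (4 * ∑' n : ℕ, ENNReal.ofReal ((n:ℝ)^(al-1))
            * ENNReal.ofReal (((1-γ*μ i)^2)^n * (c i)^2)) := by
    intro i
    by_cases h : p i
    swap
    · simp only [if_neg h]; exact zero_le
    simp only [if_pos h, hF0]
    by_cases hμ0 : μ i = 0
    · have hc0 : c i = 0 := hzero i hμ0
      simp [hc0]
    have hμpos : 0 < μ i := lt_of_le_of_ne (hμ i) (Ne.symm hμ0)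
    set d := γ*μ i*(2-γ*μ i) with hd
    have hγμ : γ * μ i ≤ 1 := by nlinarith [hμR i, hγ0.le]
    have hgm : 0 < γ * μ i := mul_pos hγ0 hμpos
    have hd0 : 0 < d := by rw [hd]; nlinarith
    have hd2 : d ≤ 1/2 := h
    have hq : 1 - d = (1-γ*μ i)^2 := by rw [hd]; ring
    have haux := aux_sum_ennreal hal hd0 hd2 (c i)
    rw [hq] at haux
    have hF : (ENNReal.ofReal (μ i))^(-al) = ENNReal.ofReal ((μ i)^(-al)) :=
      ENNReal.ofReal_rpow_of_pos hμpos
    have hreal : (μ i)^(-al) * (c i)^2 ≤ (16*γ)^al * ((1/(8*d))^al * (c i)^2) := by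
      have h1 : (μ i)^(-al) ≤ (16*γ)^al * (1/(8*d))^al := by
        rw [← Real.mul_rpow (by positivity) (by positivity)]
        rw [Real.rpow_neg hμpos.le, ← Real.inv_rpow hμpos.le]
        apply Real.rpow_le_rpow (by positivity) ?_ hal.le
        have hd2γμ : d ≤ 2*(γ*μ i) := by rw [hd]; nlinarith [sq_nonneg (γ*μ i)]
        rw [show (16*γ)*(1/(8*d)) = 2*γ/d by field_simp; ring]
        rw [inv_eq_one_div, div_le_div_iff₀ hμpos hd0]
        nlinarith
      calc (μ i)^(-al) * (c i)^2 ≤ ((16*γ)^al * (1/(8*d))^al) * (c i)^2 :=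
            mul_le_mul_of_nonneg_right h1 (sq_nonneg _)
        _ = _ := by ring
    calc (ENNReal.ofReal (μ i))^(-al) * ENNReal.ofReal ((c i)^2)
        = ENNReal.ofReal ((μ i)^(-al) * (c i)^2) := by
          rw [hF, ← ENNReal.ofReal_mul (Real.rpow_nonneg hμpos.le _)]
      _ ≤ ENNReal.ofReal ((16*γ)^al * ((1/(8*d))^al * (c i)^2)) := ofReal_le_ofReal hreal
      _ = ENNReal.ofReal ((16*γ)^al) * ENNReal.ofReal ((1/(8*d))^al * (c i)^2) :=
          ENNReal.ofReal_mul (by positivity)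
      _ ≤ _ := mul_le_mul_right haux _
  have hTbound : (∑' i, if p i then F i else 0) ≤ ENNReal.ofReal ((16*γ)^al) * (4 * S) := by
    calc (∑' i, if p i then F i else 0)
        ≤ ∑' i, ENNReal.ofReal ((16*γ)^al)
            * (4 * ∑' n : ℕ, ENNReal.ofReal ((n:ℝ)^(al-1))
                * ENNReal.ofReal (((1-γ*μ i)^2)^n * (c i)^2)) := ENNReal.tsum_le_tsum hperi
      _ = ENNReal.ofReal ((16*γ)^al)
            * (4 * ∑' i, ∑' n : ℕ, ENNReal.ofReal ((n:ℝ)^(al-1))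
                * ENNReal.ofReal (((1-γ*μ i)^2)^n * (c i)^2)) := by
          rw [ENNReal.tsum_mul_left, ENNReal.tsum_mul_left]
      _ ≤ ENNReal.ofReal ((16*γ)^al) * (4 * S) := by
          apply mul_le_mul_right
          apply mul_le_mul_right
          rw [ENNReal.tsum_comm]
          apply ENNReal.tsum_le_tsum; intro n
          rw [ENNReal.tsum_mul_left]
          apply mul_le_mul_right
          rw [← hsum n]
          exact ENNReal.tsum_le_tsum (fun i => key n i)
  have : ENNReal.ofReal ((16*γ)^al) * (4 * S) = ⊤ := top_le_iff.mp (hT ▸ hTbound)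
  exact absurd this (ENNReal.mul_ne_top ofReal_ne_top
    (ENNReal.mul_ne_top (by norm_num) hS))


private lemma sgd_aux_meas
    {H : Type*} [NormedAddCommGroup H] [InnerProductSpace ℝ H] [CompleteSpace H]
    [MeasurableSpace H] [BorelSpace H] [SecondCountableTopology H]
    {Ω : Type*} [MeasurableSpace Ω] (P : Measure Ω) [IsProbabilityMeasure P]
    (X : ℕ → Ω → H) (hXmeas : ∀ n, Measurable (X n))
    (hindep : iIndepFun X P)
    (θstar : H) (γ : ℝ)
    (θ : ℕ → Ω → H) (h0 : ∀ ω, θ 0 ω = 0)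
    (hrec : ∀ n ω, θ (n + 1) ω = θ n ω
      - (γ * (inner ℝ (θ n ω - θstar) (X (n + 1) ω) : ℝ)) • X (n + 1) ω) :
    (∀ n, Measurable (θ n)) ∧ (∀ n, IndepFun (θ n) (X (n+1)) P) := by
  have hG : Continuous (fun p : H × H =>
      p.1 - (γ * (inner ℝ (p.1 - θstar) p.2 : ℝ)) • p.2) := by
    apply Continuous.sub continuous_fst
    exact Continuous.smul
      (continuous_const.mul (continuous_inner.comp
        ((continuous_fst.sub continuous_const).prodMk continuous_snd)))
      continuous_snd
  have hrep : ∀ n, ∃ F : ({k : ℕ // k ∈ Finset.Iic n} → H) → H,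
      Measurable F ∧ ∀ ω, θ n ω = F (fun k => X (k:ℕ) ω) := by
    intro n
    induction n with
    | zero => exact ⟨fun _ => 0, measurable_const, fun ω => h0 ω⟩
    | succ n ih =>
      obtain ⟨F, hF, hFeq⟩ := ih
      refine ⟨fun g => (fun p : H × H => p.1 - (γ * (inner ℝ (p.1 - θstar) p.2 : ℝ)) • p.2)
          (F (fun k => g ⟨(k:ℕ), by have := k.2; simp only [Finset.mem_Iic] at *; omega⟩),
           g ⟨n+1, by simp⟩), ?_, ?_⟩
      · apply hG.measurable.comp
        apply Measurable.prod
        · exact hF.comp (measurable_pi_lambda _ (fun k => measurable_pi_apply _))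
        · exact measurable_pi_apply _
      · intro ω
        simp only [hrec n ω, hFeq ω]
  have hθmeas : ∀ n, Measurable (θ n) := by
    intro n
    obtain ⟨F, hF, hFeq⟩ := hrep n
    have : θ n = F ∘ (fun ω (k : {k : ℕ // k ∈ Finset.Iic n}) => X (k:ℕ) ω) := by
      funext ω; exact hFeq ω
    rw [this]
    exact hF.comp (measurable_pi_lambda _ (fun k => hXmeas _))
  refine ⟨hθmeas, fun n => ?_⟩
  obtain ⟨F, hF, hFeq⟩ := hrep n
  have hdisj : Disjoint (Finset.Iic n) ({n+1} : Finset ℕ) := by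
    simp only [Finset.disjoint_left, Finset.mem_Iic, Finset.mem_singleton]
    omega
  have h := hindep.indepFun_finset (Finset.Iic n) {n+1} hdisj hXmeas
  have h2 := h.comp (φ := F)
      (ψ := fun g : {k : ℕ // k ∈ ({n+1} : Finset ℕ)} → H => g ⟨n+1, Finset.mem_singleton_self _⟩)
      hF (measurable_pi_apply _ : Measurable fun g : {k : ℕ // k ∈ ({n+1} : Finset ℕ)} → H => g ⟨n+1, Finset.mem_singleton_self _⟩)
  convert h2 using 1
  funext ω; exact hFeq ω
  rfl


private lemma sgd_aux_bound
    {H : Type*} [NormedAddCommGroup H] [InnerProductSpace ℝ H] [CompleteSpace H]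
    [MeasurableSpace H] [BorelSpace H] [SecondCountableTopology H]
    {Ω : Type*} [MeasurableSpace Ω] (P : Measure Ω) [IsProbabilityMeasure P]
    (b : HilbertBasis ℕ ℝ H)
    (X : ℕ → Ω → H)
    (θstar : H) (γ R₀ : ℝ) (hγ0 : 0 < γ) (hγR : γ * R₀ ≤ 1)
    (θ : ℕ → Ω → H) (h0 : ∀ ω, θ 0 ω = 0)
    (hrec : ∀ n ω, θ (n + 1) ω = θ n ω
      - (γ * (inner ℝ (θ n ω - θstar) (X (n + 1) ω) : ℝ)) • X (n + 1) ω)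
    (haeX : ∀ᵐ ω ∂P, ∀ m, ‖X m ω‖^2 ≤ R₀) :
    (∀ᵐ ω ∂P, ∀ n, ‖θ n ω - θstar‖ ≤ ‖θstar‖) ∧
    (∀ (W : Ω → H), Measurable W →
      (∑' j, ∫⁻ ω, ENNReal.ofReal ((inner ℝ (W ω) (b j) : ℝ)^2) ∂P)
        = ∫⁻ ω, ENNReal.ofReal (‖W ω‖^2) ∂P) := by
  constructor
  · filter_upwards [haeX] with ω hω
    intro n
    induction n with
    | zero => rw [h0 ω, zero_sub, norm_neg]
    | succ n ih =>
      have hxb : γ * ‖X (n+1) ω‖^2 ≤ 1 := by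
        have h1 := hω (n+1)
        nlinarith [hγ0.le]
      set z := θ n ω - θstar with hz
      set x := X (n+1) ω with hx
      set t := γ * (inner ℝ z x : ℝ) with ht
      have hid : θ (n+1) ω - θstar = z - t • x := by
        rw [hrec n ω, sub_right_comm]
      have hsq : ‖z - t • x‖^2 ≤ ‖z‖^2 := by
        rw [norm_sub_sq_real, real_inner_smul_right, norm_smul, mul_pow,
          Real.norm_eq_abs, sq_abs]
        have h1 : (0:ℝ) ≤ γ * (inner ℝ z x : ℝ)^2 := by positivity
        nlinarith [sq_nonneg (inner ℝ z x : ℝ), hγ0.le, sq_nonneg ‖x‖]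
      rw [hid]
      calc ‖z - t • x‖ ≤ ‖z‖ := by
            nlinarith [norm_nonneg (z - t • x), norm_nonneg z]
        _ ≤ ‖θstar‖ := ih
  · intro W hW
    rw [← lintegral_tsum (fun j => ((hW.inner measurable_const).pow_const 2).ennreal_ofReal.aemeasurable)]
    apply lintegral_congr; intro ω
    have hs := b.hasSum_inner_mul_inner (W ω) (W ω)
    have hsum : Summable (fun j => (inner ℝ (W ω) (b j) : ℝ)^2) := by
      have := hs.summable
      apply this.congr
      intro j
      rw [← real_inner_comm (b j) (W ω)]; ring
    have htsum : ∑' j, (inner ℝ (W ω) (b j) : ℝ)^2 = ‖W ω‖^2 := by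
      have h2 := b.tsum_inner_mul_inner (W ω) (W ω)
      rw [real_inner_self_eq_norm_sq] at h2
      rw [← h2]
      apply tsum_congr; intro j
      rw [← real_inner_comm (b j) (W ω)]; ring
    rw [← ENNReal.ofReal_tsum_of_nonneg (fun j => sq_nonneg _) hsum, htsum]


private lemma sgd_aux_mean
    {H : Type*} [NormedAddCommGroup H] [InnerProductSpace ℝ H] [CompleteSpace H]
    [MeasurableSpace H] [BorelSpace H] [SecondCountableTopology H]
    {Ω : Type*} [MeasurableSpace Ω] (P : Measure Ω) [IsProbabilityMeasure P]
    (b : HilbertBasis ℕ ℝ H) (μ : ℕ → ℝ) (hμ : ∀ i, 0 ≤ μ i)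
    (X : ℕ → Ω → H) (hXmeas : ∀ n, Measurable (X n))
    (hident : ∀ n, IdentDistrib (X n) (X 0) P P)
    (hcov : ∀ i j, (∫ ω, (inner ℝ (X 0 ω) (b i) : ℝ) * (inner ℝ (X 0 ω) (b j) : ℝ) ∂P)
      = if i = j then μ i else 0)
    (θstar : H) (γ R₀ : ℝ) (hR0 : 0 < R₀)
    (θ : ℕ → Ω → H)
    (hrec : ∀ n ω, θ (n + 1) ω = θ n ω
      - (γ * (inner ℝ (θ n ω - θstar) (X (n + 1) ω) : ℝ)) • X (n + 1) ω)
    (hθmeas : ∀ n, Measurable (θ n))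
    (hindepθX : ∀ n, IndepFun (θ n) (X (n+1)) P)
    (haeB : ∀ᵐ ω ∂P, ∀ n, ‖θ n ω - θstar‖ ≤ ‖θstar‖)
    (haeX : ∀ᵐ ω ∂P, ∀ m, ‖X m ω‖^2 ≤ R₀)
    (hpars : ∀ (W : Ω → H), Measurable W →
      (∑' j, ∫⁻ ω, ENNReal.ofReal ((inner ℝ (W ω) (b j) : ℝ)^2) ∂P)
        = ∫⁻ ω, ENNReal.ofReal (‖W ω‖^2) ∂P) :
    ∀ n i, (∫ ω, (inner ℝ (θ (n+1) ω - θstar) (b i) : ℝ) ∂P)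
      = (1 - γ * μ i) * ∫ ω, (inner ℝ (θ n ω - θstar) (b i) : ℝ) ∂P := by
  have hbi : ∀ j, ‖b j‖ = 1 := fun j => b.orthonormal.1 j
  set sR := Real.sqrt R₀ with hsR
  have haeXn : ∀ᵐ ω ∂P, ∀ m, ‖X m ω‖ ≤ sR := by
    filter_upwards [haeX] with ω h m
    have := h m
    nlinarith [Real.sqrt_nonneg R₀, norm_nonneg (X m ω), Real.sq_sqrt hR0.le]
  intro n i
  -- abbreviations
  set Zc : ℕ → Ω → ℝ := fun j ω => (inner ℝ (θ n ω - θstar) (b j) : ℝ) with hZc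
  set Xc : ℕ → Ω → ℝ := fun j ω => (inner ℝ (X (n+1) ω) (b j) : ℝ) with hXc
  have hZmeas : Measurable (fun ω => θ n ω - θstar) := (hθmeas n).sub measurable_const
  have hZcmeas : ∀ j, Measurable (Zc j) := fun j => hZmeas.inner measurable_const
  have hXcmeas : ∀ j, Measurable (Xc j) := fun j => (hXmeas (n+1)).inner measurable_const
  have hZcbd : ∀ j, ∀ᵐ ω ∂P, |Zc j ω| ≤ ‖θstar‖ := by
    intro j
    filter_upwards [haeB] with ω h
    calc |Zc j ω| ≤ ‖θ n ω - θstar‖ * ‖b j‖ := abs_real_inner_le_norm _ _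
      _ = ‖θ n ω - θstar‖ := by rw [hbi j, mul_one]
      _ ≤ ‖θstar‖ := h n
  have hXcbd : ∀ j, ∀ᵐ ω ∂P, |Xc j ω| ≤ sR := by
    intro j
    filter_upwards [haeXn] with ω h
    calc |Xc j ω| ≤ ‖X (n+1) ω‖ * ‖b j‖ := abs_real_inner_le_norm _ _
      _ = ‖X (n+1) ω‖ := by rw [hbi j, mul_one]
      _ ≤ sR := h (n+1)
  have hZcint : ∀ j, Integrable (Zc j) P := by
    intro j
    refine (MemLp.of_bound (hZcmeas j).aestronglyMeasurable ‖θstar‖ ?_).integrable le_rfl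
    exact (hZcbd j).mono (fun ω h => by simpa [Real.norm_eq_abs] using h)
  have hXXint : ∀ j k, Integrable (fun ω => Xc j ω * Xc k ω) P := by
    intro j k
    refine (MemLp.of_bound (((hXcmeas j).mul (hXcmeas k)).aestronglyMeasurable) (sR * sR) ?_).integrable le_rfl
    filter_upwards [hXcbd j, hXcbd k] with ω h1 h2
    rw [Pi.mul_apply, Real.norm_eq_abs, abs_mul]
    exact mul_le_mul h1 h2 (abs_nonneg _) (Real.sqrt_nonneg _)
  -- value of the covariance integrals
  have hXXval : ∀ j, ∫ ω, Xc j ω * Xc i ω ∂P = if j = i then μ i else 0 := by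
    intro j
    have hu : Measurable (fun x : H => (inner ℝ x (b j) : ℝ) * (inner ℝ x (b i) : ℝ)) :=
      (measurable_id.inner measurable_const).mul (measurable_id.inner measurable_const)
    have hid := ((hident (n+1)).comp hu).integral_eq
    simp only [Function.comp] at hid
    rw [hZc] at *
    calc ∫ ω, Xc j ω * Xc i ω ∂P = ∫ ω, (inner ℝ (X 0 ω) (b j) : ℝ) * (inner ℝ (X 0 ω) (b i) : ℝ) ∂P := hid
      _ = if j = i then μ j else 0 := hcov j i
      _ = if j = i then μ i else 0 := by split <;> simp_all
  -- independence
  have hindmul : ∀ j, ∫ ω, Zc j ω * (Xc j ω * Xc i ω) ∂P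
      = (∫ ω, Zc j ω ∂P) * (∫ ω, Xc j ω * Xc i ω ∂P) := by
    intro j
    have hφ : Measurable (fun z : H => (inner ℝ (z - θstar) (b j) : ℝ)) :=
      (measurable_id.sub measurable_const).inner measurable_const
    have hψ : Measurable (fun x : H => (inner ℝ x (b j) : ℝ) * (inner ℝ x (b i) : ℝ)) :=
      (measurable_id.inner measurable_const).mul (measurable_id.inner measurable_const)
    have h := ((hindepθX n).comp hφ hψ)
    exact IndepFun.integral_fun_mul_eq_mul_integral h (hZcint j).aestronglyMeasurable (hXXint j i).aestronglyMeasurable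
  -- the tsum exchange
  have hptsum : ∀ ω, (inner ℝ (θ n ω - θstar) (X (n+1) ω) : ℝ) * Xc i ω
      = ∑' j, Zc j ω * (Xc j ω * Xc i ω) := by
    intro ω
    have h := b.tsum_inner_mul_inner (θ n ω - θstar) (X (n+1) ω)
    rw [← h, ← tsum_mul_right]
    apply tsum_congr; intro j
    rw [← real_inner_comm (b j) (X (n+1) ω)]
    simp only [hZc, hXc]; ring
  have hfin : ∑' j, ∫⁻ ω, ‖Zc j ω * (Xc j ω * Xc i ω)‖ₑ ∂P ≠ ⊤ := by
    have hb1 : ∀ j, ∫⁻ ω, ‖Zc j ω * (Xc j ω * Xc i ω)‖ₑ ∂P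
        ≤ ENNReal.ofReal sR * (∫⁻ ω, ENNReal.ofReal ((Zc j ω)^2) ∂P
            + ∫⁻ ω, ENNReal.ofReal ((Xc j ω)^2) ∂P) := by
      intro j
      have hmono : ∫⁻ ω, ‖Zc j ω * (Xc j ω * Xc i ω)‖ₑ ∂P
          ≤ ∫⁻ ω, ENNReal.ofReal sR * (ENNReal.ofReal ((Zc j ω)^2) + ENNReal.ofReal ((Xc j ω)^2)) ∂P := by
        apply lintegral_mono_ae
        filter_upwards [hXcbd i] with ω hXi
        rw [← ENNReal.ofReal_add (sq_nonneg _) (sq_nonneg _),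
          ← ENNReal.ofReal_mul (Real.sqrt_nonneg _)]
        rw [Real.enorm_eq_ofReal_abs]
        apply ENNReal.ofReal_le_ofReal
        have h1 : |Zc j ω * (Xc j ω * Xc i ω)| = |Zc j ω| * |Xc j ω| * |Xc i ω| := by
          rw [abs_mul, abs_mul]; ring
        rw [h1]
        have h2 : |Zc j ω| * |Xc j ω| ≤ (Zc j ω)^2 + (Xc j ω)^2 := by
          nlinarith [sq_nonneg (|Zc j ω| - |Xc j ω|), abs_nonneg (Zc j ω), abs_nonneg (Xc j ω),
            sq_abs (Zc j ω), sq_abs (Xc j ω)]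
        calc |Zc j ω| * |Xc j ω| * |Xc i ω| ≤ ((Zc j ω)^2 + (Xc j ω)^2) * sR := by
              apply mul_le_mul h2 hXi (abs_nonneg _); positivity
          _ = sR * ((Zc j ω)^2 + (Xc j ω)^2) := by ring
      refine hmono.trans (le_of_eq ?_)
      have m1 : Measurable fun ω => ENNReal.ofReal ((Zc j ω)^2) :=
        ((hZcmeas j).pow_const 2).ennreal_ofReal
      have m2 : Measurable fun ω => ENNReal.ofReal ((Xc j ω)^2) :=
        ((hXcmeas j).pow_const 2).ennreal_ofReal
      rw [lintegral_const_mul _ (f := fun ω => ENNReal.ofReal ((Zc j ω)^2) + ENNReal.ofReal ((Xc j ω)^2)) (m1.add m2), lintegral_add_left m1]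
    have hLbd : ∀ (W : Ω → H) (c : ℝ), (∀ᵐ ω ∂P, ‖W ω‖^2 ≤ c) →
        ∫⁻ ω, ENNReal.ofReal (‖W ω‖^2) ∂P ≤ ENNReal.ofReal c := by
      intro W c hc
      refine (lintegral_mono_ae (hc.mono fun ω h => ENNReal.ofReal_le_ofReal h)).trans ?_
      simp [lintegral_const]
    have hend : ∑' j, ∫⁻ ω, ‖Zc j ω * (Xc j ω * Xc i ω)‖ₑ ∂P
        ≤ ENNReal.ofReal sR * (ENNReal.ofReal (‖θstar‖^2) + ENNReal.ofReal R₀) := by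
      calc ∑' j, ∫⁻ ω, ‖Zc j ω * (Xc j ω * Xc i ω)‖ₑ ∂P
          ≤ ∑' j, ENNReal.ofReal sR * (∫⁻ ω, ENNReal.ofReal ((Zc j ω)^2) ∂P
              + ∫⁻ ω, ENNReal.ofReal ((Xc j ω)^2) ∂P) := ENNReal.tsum_le_tsum hb1
        _ = ENNReal.ofReal sR * ((∑' j, ∫⁻ ω, ENNReal.ofReal ((Zc j ω)^2) ∂P)
              + (∑' j, ∫⁻ ω, ENNReal.ofReal ((Xc j ω)^2) ∂P)) := by
            rw [ENNReal.tsum_mul_left, ENNReal.tsum_add]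
        _ = ENNReal.ofReal sR * ((∫⁻ ω, ENNReal.ofReal (‖θ n ω - θstar‖^2) ∂P)
              + (∫⁻ ω, ENNReal.ofReal (‖X (n+1) ω‖^2) ∂P)) := by
            rw [hpars _ hZmeas, hpars _ (hXmeas (n+1))]
        _ ≤ ENNReal.ofReal sR * (ENNReal.ofReal (‖θstar‖^2) + ENNReal.ofReal R₀) := by
            apply mul_le_mul_right
            apply add_le_add
            · apply hLbd
              filter_upwards [haeB] with ω h
              have := h n
              nlinarith [norm_nonneg (θ n ω - θstar), norm_nonneg θstar]
            · exact hLbd _ _ ((haeX.mono fun ω h => h (n+1)))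
    exact ne_top_of_le_ne_top (by finiteness) hend
  -- integrability of the full product
  have hZXint : Integrable (fun ω => (inner ℝ (θ n ω - θstar) (X (n+1) ω) : ℝ) * Xc i ω) P := by
    refine (MemLp.of_bound (((hZmeas.inner (hXmeas (n+1))).mul (hXcmeas i)).aestronglyMeasurable)
      (‖θstar‖ * sR * sR) ?_).integrable le_rfl
    filter_upwards [haeB, haeXn, hXcbd i] with ω h1 h2 h3
    rw [Pi.mul_apply, Real.norm_eq_abs, abs_mul]
    have ha : |(inner ℝ (θ n ω - θstar) (X (n+1) ω) : ℝ)| ≤ ‖θstar‖ * sR := by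
      calc |(inner ℝ (θ n ω - θstar) (X (n+1) ω) : ℝ)| ≤ ‖θ n ω - θstar‖ * ‖X (n+1) ω‖ :=
            abs_real_inner_le_norm _ _
        _ ≤ ‖θstar‖ * sR := by
            apply mul_le_mul (h1 n) (h2 (n+1)) (norm_nonneg _) (norm_nonneg _)
    exact mul_le_mul ha h3 (abs_nonneg _) (by positivity)
  -- key identity
  have key1 : ∫ ω, (inner ℝ (θ n ω - θstar) (X (n+1) ω) : ℝ) * Xc i ω ∂P
      = μ i * ∫ ω, Zc i ω ∂P := by
    calc ∫ ω, (inner ℝ (θ n ω - θstar) (X (n+1) ω) : ℝ) * Xc i ω ∂P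
        = ∫ ω, ∑' j, Zc j ω * (Xc j ω * Xc i ω) ∂P := integral_congr_ae (ae_of_all _ hptsum)
      _ = ∑' j, ∫ ω, Zc j ω * (Xc j ω * Xc i ω) ∂P :=
          integral_tsum (fun j => (((hZcmeas j).mul ((hXcmeas j).mul (hXcmeas i))).aestronglyMeasurable)) hfin
      _ = ∑' j, (∫ ω, Zc j ω ∂P) * (if j = i then μ i else 0) := by
          exact tsum_congr fun j => by rw [hindmul j, hXXval j]
      _ = (∫ ω, Zc i ω ∂P) * μ i := by
          rw [tsum_eq_single i (fun j hj => by simp [hj])]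
          simp
      _ = μ i * ∫ ω, Zc i ω ∂P := mul_comm _ _
  -- conclude
  have hpt : ∀ ω, (inner ℝ (θ (n+1) ω - θstar) (b i) : ℝ)
      = Zc i ω - γ * ((inner ℝ (θ n ω - θstar) (X (n+1) ω) : ℝ) * Xc i ω) := by
    intro ω
    rw [hrec n ω, sub_right_comm, inner_sub_left, real_inner_smul_left]
    simp only [hZc, hXc]; ring
  calc ∫ ω, (inner ℝ (θ (n+1) ω - θstar) (b i) : ℝ) ∂P
      = ∫ ω, (Zc i ω - γ * ((inner ℝ (θ n ω - θstar) (X (n+1) ω) : ℝ) * Xc i ω)) ∂P :=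
        integral_congr_ae (ae_of_all _ hpt)
    _ = (∫ ω, Zc i ω ∂P) - γ * ∫ ω, (inner ℝ (θ n ω - θstar) (X (n+1) ω) : ℝ) * Xc i ω ∂P := by
        rw [integral_sub (hZcint i) (hZXint.const_mul γ), integral_const_mul]
    _ = (∫ ω, Zc i ω ∂P) - γ * (μ i * ∫ ω, Zc i ω ∂P) := by rw [key1]
    _ = (1 - γ * μ i) * ∫ ω, (inner ℝ (θ n ω - θstar) (b i) : ℝ) ∂P := by
        simp only [hZc]; ring

end Aux

/-- Theorem 2, reconstruction error lower bound: under the noiseless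
linear model with `0 < γ ≤ 1/R₀` and `θ* ∉ Σ^{ᾱ/2}(H)` (i.e. `‖Σ^{-ᾱ/2}θ*‖² = ∞`),
for every `ε > 0` the reconstruction error is not dominated by `n^{-(ᾱ+ε)}`:
`limsup_n n^{ᾱ+ε} E[‖θ_n − θ*‖²] = ∞`. -/
theorem sgd_noiseless_reconstruction_lower_bound
    {H : Type*} [NormedAddCommGroup H] [InnerProductSpace ℝ H] [CompleteSpace H]
    [MeasurableSpace H] [BorelSpace H] [SecondCountableTopology H]
    {Ω : Type*} [MeasurableSpace Ω] (P : Measure Ω) [IsProbabilityMeasure P]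
    (b : HilbertBasis ℕ ℝ H) (μ : ℕ → ℝ) (hμ : ∀ i, 0 ≤ μ i)
    (X : ℕ → Ω → H) (hXmeas : ∀ n, Measurable (X n))
    (hindep : iIndepFun X P)
    (hident : ∀ n, IdentDistrib (X n) (X 0) P P)
    (hcov : ∀ i j, (∫ ω, (inner ℝ (X 0 ω) (b i) : ℝ) * (inner ℝ (X 0 ω) (b j) : ℝ) ∂P)
      = if i = j then μ i else 0)
    (θstar : H) (ᾱ γ R₀ : ℝ) (hᾱ : 0 < ᾱ)
    (hbound : ∀ n, ∀ᵐ ω ∂P, ‖X n ω‖ ^ 2 ≤ R₀)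
    (hirr : specPow b μ ᾱ θstar = ⊤)
    (hγ0 : 0 < γ) (hγ : γ ≤ 1 / R₀)
    (θ : ℕ → Ω → H) (h0 : ∀ ω, θ 0 ω = 0)
    (hrec : ∀ n ω, θ (n + 1) ω = θ n ω
      - (γ * (inner ℝ (θ n ω - θstar) (X (n + 1) ω) : ℝ)) • X (n + 1) ω) :
    ∀ ε : ℝ, 0 < ε →
      Filter.limsup (fun n : ℕ =>
          ENNReal.ofReal ((n : ℝ) ^ (ᾱ + ε))
            * ∫⁻ ω, ENNReal.ofReal (‖θ n ω - θstar‖ ^ 2) ∂P) atTop = ⊤ := by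
  intro ε hε
  have haeX : ∀ᵐ ω ∂P, ∀ m, ‖X m ω‖^2 ≤ R₀ := ae_all_iff.mpr hbound
  haveI hne : (MeasureTheory.ae P).NeBot := ae_neBot.mpr (IsProbabilityMeasure.ne_zero P)
  have h0R : 0 ≤ R₀ := by
    obtain ⟨ω, hω⟩ := (hbound 0).exists
    exact le_trans (sq_nonneg _) hω
  have hR0 : 0 < R₀ := by
    rcases h0R.lt_or_eq with h | h
    · exact h
    · exfalso
      rw [← h] at hγ
      norm_num at hγ
      linarith
  have hγR : γ * R₀ ≤ 1 := by
    rw [le_div_iff₀ hR0] at hγ; linarith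
  have hbi : ∀ j : ℕ, ‖b j‖ = 1 := fun j => b.orthonormal.1 j
  obtain ⟨hθmeas, hindepθX⟩ := sgd_aux_meas P X hXmeas hindep θstar γ θ h0 hrec
  obtain ⟨haeB, -⟩ := sgd_aux_bound P b X θstar γ R₀ hγ0 hγR θ h0 hrec haeX
  -- pointwise Parseval
  have hparse : ∀ w : H, (∑' j : ℕ, ENNReal.ofReal ((inner ℝ w (b j) : ℝ)^2))
      = ENNReal.ofReal (‖w‖^2) := by
    intro w
    have hs := b.hasSum_inner_mul_inner w w
    have hsum : Summable (fun j => (inner ℝ w (b j) : ℝ)^2) := by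
      have := hs.summable
      apply this.congr
      intro j
      rw [← real_inner_comm (b j) w]; ring
    have htsum : ∑' j, (inner ℝ w (b j) : ℝ)^2 = ‖w‖^2 := by
      have h2 := b.tsum_inner_mul_inner w w
      rw [real_inner_self_eq_norm_sq] at h2
      rw [← h2]
      apply tsum_congr; intro j
      rw [← real_inner_comm (b j) w]; ring
    rw [← ENNReal.ofReal_tsum_of_nonneg (fun j => sq_nonneg _) hsum, htsum]
  -- integrated Parseval
  have hpars : ∀ (W : Ω → H), Measurable W →
      (∑' j : ℕ, ∫⁻ ω, ENNReal.ofReal ((inner ℝ (W ω) (b j) : ℝ)^2) ∂P)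
        = ∫⁻ ω, ENNReal.ofReal (‖W ω‖^2) ∂P := by
    intro W hW
    rw [← lintegral_tsum (fun j =>
      ((hW.inner measurable_const).pow_const 2).ennreal_ofReal.aemeasurable)]
    exact lintegral_congr (fun ω => hparse (W ω))
  -- eigenvalues are bounded by R₀
  have hμR : ∀ i, μ i ≤ R₀ := by
    intro i
    have hXc0meas : Measurable (fun ω => (inner ℝ (X 0 ω) (b i) : ℝ) * (inner ℝ (X 0 ω) (b i) : ℝ)) :=
      ((hXmeas 0).inner measurable_const).mul ((hXmeas 0).inner measurable_const)
    have hXc0int : Integrable (fun ω => (inner ℝ (X 0 ω) (b i) : ℝ) * (inner ℝ (X 0 ω) (b i) : ℝ)) P := by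
      refine (MemLp.of_bound hXc0meas.aestronglyMeasurable R₀ ?_).integrable le_rfl
      filter_upwards [hbound 0] with ω h
      rw [Real.norm_eq_abs, abs_mul]
      have h1 : |(inner ℝ (X 0 ω) (b i) : ℝ)| ≤ ‖X 0 ω‖ := by
        have := abs_real_inner_le_norm (X 0 ω) (b i)
        rwa [hbi i, mul_one] at this
      calc |(inner ℝ (X 0 ω) (b i) : ℝ)| * |(inner ℝ (X 0 ω) (b i) : ℝ)|
          ≤ ‖X 0 ω‖ * ‖X 0 ω‖ := mul_le_mul h1 h1 (abs_nonneg _) (norm_nonneg _)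
        _ = ‖X 0 ω‖^2 := (sq ‖X 0 ω‖).symm
        _ ≤ R₀ := h
    have := hcov i i
    rw [if_pos rfl] at this
    rw [← this]
    have hle : ∫ ω, (inner ℝ (X 0 ω) (b i) : ℝ) * (inner ℝ (X 0 ω) (b i) : ℝ) ∂P
        ≤ ∫ _, R₀ ∂P := by
      apply integral_mono_ae hXc0int (integrable_const R₀)
      filter_upwards [hbound 0] with ω h
      have h1 : |(inner ℝ (X 0 ω) (b i) : ℝ)| ≤ ‖X 0 ω‖ := by
        have := abs_real_inner_le_norm (X 0 ω) (b i)
        rwa [hbi i, mul_one] at this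
      calc (inner ℝ (X 0 ω) (b i) : ℝ) * (inner ℝ (X 0 ω) (b i) : ℝ)
          = |(inner ℝ (X 0 ω) (b i) : ℝ)| * |(inner ℝ (X 0 ω) (b i) : ℝ)| := by
            rw [← abs_mul, abs_mul_self]
        _ ≤ ‖X 0 ω‖ * ‖X 0 ω‖ := mul_le_mul h1 h1 (abs_nonneg _) (norm_nonneg _)
        _ = ‖X 0 ω‖^2 := (sq ‖X 0 ω‖).symm
        _ ≤ R₀ := h
    simpa [measure_univ] using hle
  have hm : ∀ n i, (∫ ω, (inner ℝ (θ (n+1) ω - θstar) (b i) : ℝ) ∂P)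
      = (1 - γ * μ i) * ∫ ω, (inner ℝ (θ n ω - θstar) (b i) : ℝ) ∂P :=
    sgd_aux_mean P b μ hμ X hXmeas hident hcov θstar γ R₀ hR0 θ hrec hθmeas hindepθX haeB haeX hpars
  -- explicit mean values
  have hval : ∀ n i, (∫ ω, (inner ℝ (θ n ω - θstar) (b i) : ℝ) ∂P)
      = (1 - γ * μ i)^n * (-(inner ℝ θstar (b i) : ℝ)) := by
    intro n i
    induction n with
    | zero =>
      have he : (fun ω => (inner ℝ (θ 0 ω - θstar) (b i) : ℝ))
          = fun _ => -(inner ℝ θstar (b i) : ℝ) := by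
        funext ω; rw [h0 ω, zero_sub, inner_neg_left]
      rw [he, integral_const]
      simp [measure_univ]
    | succ n ih =>
      rw [hm n i, ih, pow_succ]
      ring
  -- L² membership of the coordinates
  have hZcmeas : ∀ n i, Measurable (fun ω => (inner ℝ (θ n ω - θstar) (b i) : ℝ)) :=
    fun n i => ((hθmeas n).sub measurable_const).inner measurable_const
  have hZmem2 : ∀ n i, MemLp (fun ω => (inner ℝ (θ n ω - θstar) (b i) : ℝ)) 2 P := by
    intro n i
    refine MemLp.of_bound (hZcmeas n i).aestronglyMeasurable ‖θstar‖ ?_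
    filter_upwards [haeB] with ω h
    rw [Real.norm_eq_abs]
    calc |(inner ℝ (θ n ω - θstar) (b i) : ℝ)| ≤ ‖θ n ω - θstar‖ * ‖b i‖ :=
          abs_real_inner_le_norm _ _
      _ = ‖θ n ω - θstar‖ := by rw [hbi i, mul_one]
      _ ≤ ‖θstar‖ := h n
  -- Jensen: the squared mean bounds below the second moment
  have key : ∀ n i, ENNReal.ofReal (((1 - γ*μ i)^2)^n * ((inner ℝ θstar (b i) : ℝ))^2)
      ≤ ∫⁻ ω, ENNReal.ofReal ((inner ℝ (θ n ω - θstar) (b i) : ℝ)^2) ∂P := by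
    intro n i
    have hjensen : (∫ ω, (inner ℝ (θ n ω - θstar) (b i) : ℝ) ∂P)^2
        ≤ ∫ ω, (inner ℝ (θ n ω - θstar) (b i) : ℝ)^2 ∂P := by
      have h := variance_nonneg (fun ω => (inner ℝ (θ n ω - θstar) (b i) : ℝ)) P
      rw [variance_eq_sub (hZmem2 n i)] at h
      simp only [Pi.pow_apply] at h
      linarith
    have hid : ((1 - γ*μ i)^2)^n * ((inner ℝ θstar (b i) : ℝ))^2
        = (∫ ω, (inner ℝ (θ n ω - θstar) (b i) : ℝ) ∂P)^2 := by
      rw [hval n i, mul_pow, neg_sq, ← pow_mul, ← pow_mul, Nat.mul_comm]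
    rw [hid]
    calc ENNReal.ofReal ((∫ ω, (inner ℝ (θ n ω - θstar) (b i) : ℝ) ∂P)^2)
        ≤ ENNReal.ofReal (∫ ω, (inner ℝ (θ n ω - θstar) (b i) : ℝ)^2 ∂P) :=
          ENNReal.ofReal_le_ofReal hjensen
      _ = ∫⁻ ω, ENNReal.ofReal ((inner ℝ (θ n ω - θstar) (b i) : ℝ)^2) ∂P :=
          ofReal_integral_eq_lintegral_ofReal (hZmem2 n i).integrable_sq
            (ae_of_all _ (fun ω => sq_nonneg _))
  -- total second moments
  have hsumL : ∀ n, (∑' i : ℕ, ∫⁻ ω, ENNReal.ofReal ((inner ℝ (θ n ω - θstar) (b i) : ℝ)^2) ∂P)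
      = ∫⁻ ω, ENNReal.ofReal (‖θ n ω - θstar‖^2) ∂P :=
    fun n => hpars (fun ω => θ n ω - θstar) ((hθmeas n).sub measurable_const)
  have hLbdd : ∀ n, (∫⁻ ω, ENNReal.ofReal (‖θ n ω - θstar‖^2) ∂P)
      ≤ ENNReal.ofReal (‖θstar‖^2) := by
    intro n
    have h1 : (∫⁻ ω, ENNReal.ofReal (‖θ n ω - θstar‖^2) ∂P)
        ≤ ∫⁻ _, ENNReal.ofReal (‖θstar‖^2) ∂P := by
      apply lintegral_mono_ae
      filter_upwards [haeB] with ω h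
      exact ENNReal.ofReal_le_ofReal (by nlinarith [norm_nonneg (θ n ω - θstar), h n])
    simpa [lintegral_const, measure_univ] using h1
  have hpc : (∑' i : ℕ, ENNReal.ofReal ((inner ℝ θstar (b i) : ℝ)^2))
      ≤ ENNReal.ofReal (‖θstar‖^2) := le_of_eq (hparse θstar)
  have hirr' : (∑' i : ℕ, (ENNReal.ofReal (μ i))^(-ᾱ)
      * ENNReal.ofReal ((inner ℝ θstar (b i) : ℝ)^2)) = ⊤ := hirr
  exact endgame hμ hμR hᾱ hγ0 hγR hε key hsumL hLbdd hpc hirr'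
end
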